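/- arXiv:2404.07007 — 2 statements merged into one kernel-verified Lean document; each statement's English description precedes it below -/
import Mathlib

section
/- Assume 0 < m_0 ≤ M_0 for a fixed vector v ∈ ℝ^d, suppose there exists L ∈ {k+1,…,N} with ⟨x_L(0), v⟩ = m_0, and set δ⁻₁ := (1 − e^{−Λσ}) (1/(2(N−1))) (Γ/Λ) (1 − m_0/M_0). Then for all t ∈ [2τ, 6τ] and every leader i ∈ {1,…,k}: ⟨x_i(t), v⟩ ≤ M_0 ( 1 − (1/(N+h−1)) (Γ/Λ) δ⁻₁ e^{−6τΛ} (1 − e^{−Λτ}) ). -/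
set_option maxHeartbeats 1600000


open Real Set Filter Topology
open scoped BigOperators RealInnerProductSpace

noncomputable section

/-- `Λ` : the maximum of the sup-norms of the four (positive) influence functions. -/
def Lam {d : ℕ} (ψ ψs φ φs : EuclideanSpace ℝ (Fin d) → EuclideanSpace ℝ (Fin d) → ℝ) : ℝ :=
  max
    (max (⨆ p : EuclideanSpace ℝ (Fin d) × EuclideanSpace ℝ (Fin d), ψ p.1 p.2)
         (⨆ p : EuclideanSpace ℝ (Fin d) × EuclideanSpace ℝ (Fin d), ψs p.1 p.2))
    (max (⨆ p : EuclideanSpace ℝ (Fin d) × EuclideanSpace ℝ (Fin d), φ p.1 p.2)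
         (⨆ p : EuclideanSpace ℝ (Fin d) × EuclideanSpace ℝ (Fin d), φs p.1 p.2))

/-- An influence function is admissible when it is continuous, positive and bounded. -/
def Admissible {d : ℕ} (f : EuclideanSpace ℝ (Fin d) → EuclideanSpace ℝ (Fin d) → ℝ) : Prop :=
  Continuous (fun p : EuclideanSpace ℝ (Fin d) × EuclideanSpace ℝ (Fin d) => f p.1 p.2) ∧
    (∀ z₁ z₂, 0 < f z₁ z₂) ∧
    BddAbove (Set.range fun p : EuclideanSpace ℝ (Fin d) × EuclideanSpace ℝ (Fin d) => f p.1 p.2)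

/-- `(x, y)` is a global classical solution of the two-population delayed
Hegselmann–Krause system, with `k` (resp. `h`) leaders in the first (resp. second)
population and time delay `τ`. -/
structure IsSol {d N M : ℕ} (h k : ℕ) (τ : ℝ)
    (ψ ψs φ φs : EuclideanSpace ℝ (Fin d) → EuclideanSpace ℝ (Fin d) → ℝ)
    (x : Fin N → ℝ → EuclideanSpace ℝ (Fin d))
    (y : Fin M → ℝ → EuclideanSpace ℝ (Fin d)) : Prop where
  contx : ∀ i, Continuous (x i)
  conty : ∀ j, Continuous (y j)
  odex_lead : ∀ i : Fin N, (i : ℕ) < k → ∀ t : ℝ, 0 < t →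
    HasDerivAt (x i)
      ((∑ j ∈ Finset.univ.erase i,
          (ψ (x i t) (x j t) / ((N : ℝ) + h - 1)) • (x j t - x i t)) +
        ∑ j ∈ Finset.univ.filter (fun j : Fin M => (j : ℕ) < h),
          (φ (x i t) (y j (t - τ)) / ((N : ℝ) + h - 1)) • (y j (t - τ) - x i t)) t
  odex_foll : ∀ i : Fin N, k ≤ (i : ℕ) → ∀ t : ℝ, 0 < t →
    HasDerivAt (x i)
      (∑ j ∈ Finset.univ.erase i,
          (ψ (x i t) (x j t) / ((N : ℝ) - 1)) • (x j t - x i t)) t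
  odey_lead : ∀ i : Fin M, (i : ℕ) < h → ∀ t : ℝ, 0 < t →
    HasDerivAt (y i)
      ((∑ j ∈ Finset.univ.erase i,
          (ψs (y i t) (y j t) / ((M : ℝ) + k - 1)) • (y j t - y i t)) +
        ∑ j ∈ Finset.univ.filter (fun j : Fin N => (j : ℕ) < k),
          (φs (y i t) (x j (t - τ)) / ((M : ℝ) + k - 1)) • (x j (t - τ) - y i t)) t
  odey_foll : ∀ i : Fin M, h ≤ (i : ℕ) → ∀ t : ℝ, 0 < t →
    HasDerivAt (y i)
      (∑ j ∈ Finset.univ.erase i,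
          (ψs (y i t) (y j t) / ((M : ℝ) - 1)) • (y j t - y i t)) t

/-- `m_0` : the minimum of the projections on `v` of the initial data. -/
def mInit {d N M : ℕ} (h k : ℕ) (τ : ℝ) (v : EuclideanSpace ℝ (Fin d))
    (x : Fin N → ℝ → EuclideanSpace ℝ (Fin d))
    (y : Fin M → ℝ → EuclideanSpace ℝ (Fin d)) : ℝ :=
  min
    (min (⨅ p : {i : Fin N // (i : ℕ) < k} × (Icc (-τ) (0 : ℝ)), ⟪x p.1.1 (p.2 : ℝ), v⟫)
         (⨅ i : {i : Fin N // k ≤ (i : ℕ)}, ⟪x i.1 0, v⟫))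
    (min (⨅ p : {j : Fin M // (j : ℕ) < h} × (Icc (-τ) (0 : ℝ)), ⟪y p.1.1 (p.2 : ℝ), v⟫)
         (⨅ j : {j : Fin M // h ≤ (j : ℕ)}, ⟪y j.1 0, v⟫))

/-- `M_0` : the maximum of the projections on `v` of the initial data. -/
def MInit {d N M : ℕ} (h k : ℕ) (τ : ℝ) (v : EuclideanSpace ℝ (Fin d))
    (x : Fin N → ℝ → EuclideanSpace ℝ (Fin d))
    (y : Fin M → ℝ → EuclideanSpace ℝ (Fin d)) : ℝ :=
  max
    (max (⨆ p : {i : Fin N // (i : ℕ) < k} × (Icc (-τ) (0 : ℝ)), ⟪x p.1.1 (p.2 : ℝ), v⟫)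
         (⨆ i : {i : Fin N // k ≤ (i : ℕ)}, ⟪x i.1 0, v⟫))
    (max (⨆ p : {j : Fin M // (j : ℕ) < h} × (Icc (-τ) (0 : ℝ)), ⟪y p.1.1 (p.2 : ℝ), v⟫)
         (⨆ j : {j : Fin M // h ≤ (j : ℕ)}, ⟪y j.1 0, v⟫))

/-- `C_0` : the maximum of the norms of the initial data. -/
def Cinit {d N M : ℕ} (h k : ℕ) (τ : ℝ)
    (x : Fin N → ℝ → EuclideanSpace ℝ (Fin d))
    (y : Fin M → ℝ → EuclideanSpace ℝ (Fin d)) : ℝ :=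
  max
    (max (⨆ p : {i : Fin N // (i : ℕ) < k} × (Icc (-τ) (0 : ℝ)), ‖x p.1.1 (p.2 : ℝ)‖)
         (⨆ i : {i : Fin N // k ≤ (i : ℕ)}, ‖x i.1 0‖))
    (max (⨆ p : {j : Fin M // (j : ℕ) < h} × (Icc (-τ) (0 : ℝ)), ‖y p.1.1 (p.2 : ℝ)‖)
         (⨆ j : {j : Fin M // h ≤ (j : ℕ)}, ‖y j.1 0‖))

/-- the minimum of an influence function on the ball of radius `C` (in each variable). -/
def minOnBall {d : ℕ} (C : ℝ)
    (f : EuclideanSpace ℝ (Fin d) → EuclideanSpace ℝ (Fin d) → ℝ) : ℝ :=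
  ⨅ p : {z : EuclideanSpace ℝ (Fin d) × EuclideanSpace ℝ (Fin d) // ‖z.1‖ ≤ C ∧ ‖z.2‖ ≤ C},
    f p.1.1 p.1.2

/-- `Γ := min {ψ₀, ψ*₀, φ₀, φ*₀}`. -/
def Gam {d N M : ℕ} (h k : ℕ) (τ : ℝ)
    (ψ ψs φ φs : EuclideanSpace ℝ (Fin d) → EuclideanSpace ℝ (Fin d) → ℝ)
    (x : Fin N → ℝ → EuclideanSpace ℝ (Fin d))
    (y : Fin M → ℝ → EuclideanSpace ℝ (Fin d)) : ℝ :=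
  min (min (minOnBall (Cinit h k τ x y) ψ) (minOnBall (Cinit h k τ x y) ψs))
      (min (minOnBall (Cinit h k τ x y) φ) (minOnBall (Cinit h k τ x y) φs))

/-- `m_n` : minimum of the projections on `v` over the time mesh `I_n = [(6n-1)τ, 6nτ]`. -/
def mSeq {d N M : ℕ} (h k : ℕ) (τ : ℝ) (v : EuclideanSpace ℝ (Fin d))
    (x : Fin N → ℝ → EuclideanSpace ℝ (Fin d))
    (y : Fin M → ℝ → EuclideanSpace ℝ (Fin d)) (n : ℕ) : ℝ :=
  min
    (min (⨅ p : {i : Fin N // (i : ℕ) < k} × (Icc ((6 * (n : ℝ) - 1) * τ) (6 * (n : ℝ) * τ)),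
            ⟪x p.1.1 (p.2 : ℝ), v⟫)
         (⨅ i : {i : Fin N // k ≤ (i : ℕ)}, ⟪x i.1 (6 * (n : ℝ) * τ), v⟫))
    (min (⨅ p : {j : Fin M // (j : ℕ) < h} × (Icc ((6 * (n : ℝ) - 1) * τ) (6 * (n : ℝ) * τ)),
            ⟪y p.1.1 (p.2 : ℝ), v⟫)
         (⨅ j : {j : Fin M // h ≤ (j : ℕ)}, ⟪y j.1 (6 * (n : ℝ) * τ), v⟫))

/-- `M_n` : maximum of the projections on `v` over the time mesh `I_n = [(6n-1)τ, 6nτ]`. -/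
def MSeq {d N M : ℕ} (h k : ℕ) (τ : ℝ) (v : EuclideanSpace ℝ (Fin d))
    (x : Fin N → ℝ → EuclideanSpace ℝ (Fin d))
    (y : Fin M → ℝ → EuclideanSpace ℝ (Fin d)) (n : ℕ) : ℝ :=
  max
    (max (⨆ p : {i : Fin N // (i : ℕ) < k} × (Icc ((6 * (n : ℝ) - 1) * τ) (6 * (n : ℝ) * τ)),
            ⟪x p.1.1 (p.2 : ℝ), v⟫)
         (⨆ i : {i : Fin N // k ≤ (i : ℕ)}, ⟪x i.1 (6 * (n : ℝ) * τ), v⟫))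
    (max (⨆ p : {j : Fin M // (j : ℕ) < h} × (Icc ((6 * (n : ℝ) - 1) * τ) (6 * (n : ℝ) * τ)),
            ⟪y p.1.1 (p.2 : ℝ), v⟫)
         (⨆ j : {j : Fin M // h ≤ (j : ℕ)}, ⟪y j.1 (6 * (n : ℝ) * τ), v⟫))



private lemma proj_sum_le {d : ℕ} {ι : Type*} (s : Finset ι) (g : ι → ℝ)
    (p : ι → EuclideanSpace ℝ (Fin d)) (q w : EuclideanSpace ℝ (Fin d)) {A lamD : ℝ}
    (hg0 : ∀ j ∈ s, 0 ≤ g j) (hgle : ∀ j ∈ s, g j ≤ lamD)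
    (hp : ∀ j ∈ s, ⟪p j, w⟫ ≤ A) (hA : 0 ≤ A - ⟪q, w⟫) :
    ⟪∑ j ∈ s, g j • (p j - q), w⟫ ≤ ((s.card : ℝ) * lamD) * (A - ⟪q, w⟫) := by
  calc ⟪∑ j ∈ s, g j • (p j - q), w⟫ = ∑ j ∈ s, g j * (⟪p j, w⟫ - ⟪q, w⟫) := by
        rw [sum_inner]
        exact Finset.sum_congr rfl fun j hj => by rw [real_inner_smul_left, inner_sub_left]
    _ ≤ ∑ _j ∈ s, lamD * (A - ⟪q, w⟫) := by
        refine Finset.sum_le_sum fun j hj => ?_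
        exact le_trans (mul_le_mul_of_nonneg_left (by linarith [hp j hj]) (hg0 j hj))
          (mul_le_mul_of_nonneg_right (hgle j hj) hA)
    _ = ((s.card : ℝ) * lamD) * (A - ⟪q, w⟫) := by
        simp [Finset.sum_const, nsmul_eq_mul, mul_assoc]

private lemma gronwall_up {u : ℝ → ℝ} {lam A T : ℝ} (hT : 0 ≤ T)
    (hc : Continuous u)
    (hder : ∀ t ∈ Ioo 0 T, ∃ u', HasDerivAt u u' t ∧ u' ≤ lam * (A - u t)) :
    u T - A ≤ Real.exp (-(lam * T)) * (u 0 - A) := by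
  rcases eq_or_lt_of_le hT with rfl | hT'
  · simp
  set g : ℝ → ℝ := fun t => Real.exp (lam * t) * (u t - A) with hg
  have key : ∀ t ∈ Ioo 0 T, ∃ g', HasDerivAt g g' t ∧ g' ≤ 0 := by
    intro t ht
    obtain ⟨u', hu', hule⟩ := hder t ht
    have he : HasDerivAt (fun s => Real.exp (lam * s)) (lam * Real.exp (lam * t)) t := by
      simpa [mul_comm, Function.comp_def] using (Real.hasDerivAt_exp (lam * t)).comp t
        ((hasDerivAt_id t).const_mul lam)
    refine ⟨_, he.mul (hu'.sub_const A), ?_⟩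
    have h1 : (0:ℝ) < Real.exp (lam * t) := Real.exp_pos _
    have h2 : Real.exp (lam * t) * u' ≤ Real.exp (lam * t) * (lam * (A - u t)) :=
      mul_le_mul_of_nonneg_left hule h1.le
    nlinarith [h2]
  have hanti : AntitoneOn g (Icc 0 T) := by
    apply antitoneOn_of_deriv_nonpos (convex_Icc 0 T)
    · exact ((Real.continuous_exp.comp (continuous_const.mul continuous_id)).mul
        (hc.sub continuous_const)).continuousOn
    · intro t ht
      rw [interior_Icc] at ht
      obtain ⟨g', hg', _⟩ := key t ht
      exact hg'.differentiableAt.differentiableWithinAt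
    · intro t ht
      rw [interior_Icc] at ht
      obtain ⟨g', hg', hle⟩ := key t ht
      rw [hg'.deriv]; exact hle
  have h2 : g T ≤ g 0 := hanti (left_mem_Icc.2 hT) (right_mem_Icc.2 hT) hT
  have e0 : g 0 = u 0 - A := by simp [hg]
  have key2 : Real.exp (lam * T) * (u T - A) ≤ u 0 - A := by rw [← e0]; exact h2
  rw [Real.exp_neg, inv_mul_eq_div, le_div_iff₀ (Real.exp_pos _), mul_comm]
  exact key2

private lemma gronwall_low {z : ℝ → ℝ} {lam c T : ℝ} (hT : 0 ≤ T) (hz0 : 0 ≤ z 0)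
    (hcont : Continuous z)
    (hder : ∀ t ∈ Ioo 0 T, ∃ z', HasDerivAt z z' t ∧
      -(lam * z t) + c * Real.exp (-(lam * t)) ≤ z') :
    c * T * Real.exp (-(lam * T)) ≤ z T := by
  rcases eq_or_lt_of_le hT with rfl | hT'
  · simpa using hz0
  set g : ℝ → ℝ := fun t => Real.exp (lam * t) * z t - c * t with hg
  have key : ∀ t ∈ Ioo 0 T, ∃ g', HasDerivAt g g' t ∧ 0 ≤ g' := by
    intro t ht
    obtain ⟨z', hz', hzle⟩ := hder t ht
    have he : HasDerivAt (fun s => Real.exp (lam * s)) (lam * Real.exp (lam * t)) t := by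
      simpa [mul_comm, Function.comp_def] using (Real.hasDerivAt_exp (lam * t)).comp t
        ((hasDerivAt_id t).const_mul lam)
    refine ⟨_, (he.mul hz').sub ((hasDerivAt_id t).const_mul c), ?_⟩
    have h1 : (0:ℝ) < Real.exp (lam * t) := Real.exp_pos _
    have h2 : Real.exp (lam * t) * (-(lam * z t) + c * Real.exp (-(lam * t)))
        ≤ Real.exp (lam * t) * z' := mul_le_mul_of_nonneg_left hzle h1.le
    have h3 : Real.exp (lam * t) * Real.exp (-(lam * t)) = 1 := by
      rw [← Real.exp_add]; simp
    have h4 : Real.exp (lam * t) * (-(lam * z t) + c * Real.exp (-(lam * t)))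
        = -(lam * Real.exp (lam * t) * z t) + c := by
      rw [mul_add, show Real.exp (lam * t) * (c * Real.exp (-(lam * t))) = c by
        rw [mul_comm c, ← mul_assoc, h3, one_mul]]
      ring
    rw [h4] at h2
    linarith [h2]
  have hmono : MonotoneOn g (Icc 0 T) := by
    apply monotoneOn_of_deriv_nonneg (convex_Icc 0 T)
    · exact (((Real.continuous_exp.comp (continuous_const.mul continuous_id)).mul hcont).sub
        (continuous_const.mul continuous_id)).continuousOn
    · intro t ht
      rw [interior_Icc] at ht
      obtain ⟨g', hg', _⟩ := key t ht
      exact hg'.differentiableAt.differentiableWithinAt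
    · intro t ht
      rw [interior_Icc] at ht
      obtain ⟨g', hg', hle⟩ := key t ht
      rw [hg'.deriv]; exact hle
  have h2 : g 0 ≤ g T := hmono (left_mem_Icc.2 hT) (right_mem_Icc.2 hT) hT
  have e0 : g 0 = z 0 := by simp [hg]
  have key2 : c * T ≤ Real.exp (lam * T) * z T := by
    have : Real.exp (lam * T) * z T - c * T = g T := rfl
    linarith [e0 ▸ h2]
  rw [Real.exp_neg]
  rw [mul_inv_le_iff₀ (Real.exp_pos _)]  -- maybe wrong name
  linarith [key2]

private lemma bddAbove_comp_prod_Icc {α : Type*} [Finite α] (f : α → ℝ → ℝ)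
    (hf : ∀ a, Continuous (f a)) (a b : ℝ) :
    BddAbove (Set.range fun p : α × (Icc a b) => f p.1 (p.2 : ℝ)) := by
  have key : ∀ i : α, ∃ C, ∀ t ∈ Icc a b, f i t ≤ C := by
    intro i
    obtain ⟨C, hC⟩ := (isCompact_Icc.image_of_continuousOn (hf i).continuousOn).bddAbove
    exact ⟨C, fun t ht => hC ⟨t, ht, rfl⟩⟩
  choose C hC using key
  obtain ⟨B, hB⟩ := Set.Finite.bddAbove (Set.finite_range C)
  refine ⟨B, ?_⟩
  rintro _ ⟨⟨i, t⟩, rfl⟩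
  exact le_trans (hC i t t.2) (hB ⟨i, rfl⟩)

private lemma inner_deriv' {d : ℕ} {f : ℝ → EuclideanSpace ℝ (Fin d)}
    {F w : EuclideanSpace ℝ (Fin d)} {t : ℝ} (hf : HasDerivAt f F t) :
    HasDerivAt (fun s => ⟪f s, w⟫) ⟪F, w⟫ t := by
  simpa using hf.inner ℝ (hasDerivAt_const t w)

private lemma card_filter_lt_le (n m : ℕ) :
    (Finset.univ.filter (fun j : Fin n => (j : ℕ) < m)).card ≤ m := by
  classical
  have h := Finset.card_le_card_of_injOn
    (s := Finset.univ.filter (fun j : Fin n => (j : ℕ) < m)) (t := Finset.range m)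
    (fun j : Fin n => (j : ℕ))
    (fun j hj => Finset.mem_range.2 (Finset.mem_filter.1 hj).2)
    (fun a _ b _ hab => Fin.val_injective hab)
  simpa using h

private lemma minOnBall_facts {d : ℕ} {C : ℝ} (hC : 0 ≤ C)
    {f : EuclideanSpace ℝ (Fin d) → EuclideanSpace ℝ (Fin d) → ℝ} (hf : Admissible f) :
    0 < minOnBall C f ∧
      ∀ z₁ z₂, ‖z₁‖ ≤ C → ‖z₂‖ ≤ C → minOnBall C f ≤ f z₁ z₂ := by
  obtain ⟨hfc, hfp, _⟩ := hf
  have hKeq : {z : EuclideanSpace ℝ (Fin d) × EuclideanSpace ℝ (Fin d) |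
      ‖z.1‖ ≤ C ∧ ‖z.2‖ ≤ C} = Metric.closedBall 0 C ×ˢ Metric.closedBall 0 C := by
    ext z
    simp [Set.mem_prod, Metric.mem_closedBall, dist_zero_right]
  have hK : IsCompact {z : EuclideanSpace ℝ (Fin d) × EuclideanSpace ℝ (Fin d) |
      ‖z.1‖ ≤ C ∧ ‖z.2‖ ≤ C} := by
    rw [hKeq]; exact (isCompact_closedBall _ _).prod (isCompact_closedBall _ _)
  have hne : ((0, 0) : EuclideanSpace ℝ (Fin d) × EuclideanSpace ℝ (Fin d)) ∈
      {z : EuclideanSpace ℝ (Fin d) × EuclideanSpace ℝ (Fin d) | ‖z.1‖ ≤ C ∧ ‖z.2‖ ≤ C} := by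
    simp [hC]
  obtain ⟨z₀, hz₀K, hz₀min⟩ := hK.exists_isMinOn ⟨_, hne⟩ hfc.continuousOn
  haveI : Nonempty {z : EuclideanSpace ℝ (Fin d) × EuclideanSpace ℝ (Fin d) //
      ‖z.1‖ ≤ C ∧ ‖z.2‖ ≤ C} := ⟨⟨(0, 0), hne⟩⟩
  have hmin_ge : f z₀.1 z₀.2 ≤ minOnBall C f := by
    refine le_ciInf fun p => ?_
    exact hz₀min p.2
  have hmin_le : ∀ z₁ z₂, ‖z₁‖ ≤ C → ‖z₂‖ ≤ C → minOnBall C f ≤ f z₁ z₂ := by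
    intro z₁ z₂ h1 h2
    have hbb : BddBelow (Set.range fun p : {z : EuclideanSpace ℝ (Fin d) ×
        EuclideanSpace ℝ (Fin d) // ‖z.1‖ ≤ C ∧ ‖z.2‖ ≤ C} => f p.1.1 p.1.2) := by
      refine ⟨0, ?_⟩
      rintro _ ⟨p, rfl⟩
      exact (hfp _ _).le
    exact ciInf_le hbb ⟨(z₁, z₂), ⟨h1, h2⟩⟩
  exact ⟨lt_of_lt_of_le (hfp z₀.1 z₀.2) hmin_ge, hmin_le⟩

private lemma invariance {d N M : ℕ} {h k : ℕ} {τ : ℝ} (hτ : 0 < τ)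
    {ψ ψs φ φs : EuclideanSpace ℝ (Fin d) → EuclideanSpace ℝ (Fin d) → ℝ}
    {x : Fin N → ℝ → EuclideanSpace ℝ (Fin d)} {y : Fin M → ℝ → EuclideanSpace ℝ (Fin d)}
    (hsol : IsSol h k τ ψ ψs φ φs x y)
    (hN : 2 ≤ N) (hM2 : 2 ≤ M) (hh1 : 1 ≤ h) (hk1 : 1 ≤ k)
    {Λ : ℝ} (hΛpos : 0 < Λ)
    (hψb : ∀ z₁ z₂, 0 ≤ ψ z₁ z₂ ∧ ψ z₁ z₂ ≤ Λ)
    (hψsb : ∀ z₁ z₂, 0 ≤ ψs z₁ z₂ ∧ ψs z₁ z₂ ≤ Λ)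
    (hφb : ∀ z₁ z₂, 0 ≤ φ z₁ z₂ ∧ φ z₁ z₂ ≤ Λ)
    (hφsb : ∀ z₁ z₂, 0 ≤ φs z₁ z₂ ∧ φs z₁ z₂ ≤ Λ)
    (w : EuclideanSpace ℝ (Fin d)) (B : ℝ)
    (hxl : ∀ i : Fin N, (i : ℕ) < k → ∀ s ∈ Icc (-τ) (0:ℝ), ⟪x i s, w⟫ ≤ B)
    (hxf : ∀ i : Fin N, k ≤ (i : ℕ) → ⟪x i 0, w⟫ ≤ B)
    (hyl : ∀ j : Fin M, (j : ℕ) < h → ∀ s ∈ Icc (-τ) (0:ℝ), ⟪y j s, w⟫ ≤ B)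
    (hyf : ∀ j : Fin M, h ≤ (j : ℕ) → ⟪y j 0, w⟫ ≤ B) :
    ∀ t, 0 ≤ t → (∀ i, ⟪x i t, w⟫ ≤ B) ∧ (∀ j, ⟪y j t, w⟫ ≤ B) := by
  classical
  have hcoefN : (0:ℝ) < (N:ℝ) + h - 1 := by
    have h1 : (2:ℝ) ≤ (N:ℝ) := by exact_mod_cast hN
    have h2 : (1:ℝ) ≤ (h:ℝ) := by exact_mod_cast hh1
    linarith
  have hcoefN1 : (0:ℝ) < (N:ℝ) - 1 := by
    have h1 : (2:ℝ) ≤ (N:ℝ) := by exact_mod_cast hN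
    linarith
  have hcoefM : (0:ℝ) < (M:ℝ) + k - 1 := by
    have h1 : (2:ℝ) ≤ (M:ℝ) := by exact_mod_cast hM2
    have h2 : (1:ℝ) ≤ (k:ℝ) := by exact_mod_cast hk1
    linarith
  have hcoefM1 : (0:ℝ) < (M:ℝ) - 1 := by
    have h1 : (2:ℝ) ≤ (M:ℝ) := by exact_mod_cast hM2
    linarith
  have contprojx : ∀ i, Continuous fun s => ⟪x i s, w⟫ :=
    fun i => (hsol.contx i).inner continuous_const
  have contprojy : ∀ j, Continuous fun s => ⟪y j s, w⟫ :=
    fun j => (hsol.conty j).inner continuous_const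
  have h0x : ∀ i, ⟪x i 0, w⟫ ≤ B := by
    intro i
    rcases lt_or_ge (i : ℕ) k with hi | hi
    · exact hxl i hi 0 ⟨by linarith, le_refl _⟩
    · exact hxf i hi
  have h0y : ∀ j, ⟪y j 0, w⟫ ≤ B := by
    intro j
    rcases lt_or_ge (j : ℕ) h with hj | hj
    · exact hyl j hj 0 ⟨by linarith, le_refl _⟩
    · exact hyf j hj
  intro t₀ ht₀
  suffices H : ∀ ε > 0, (∀ i, ⟪x i t₀, w⟫ ≤ B + ε) ∧ (∀ j, ⟪y j t₀, w⟫ ≤ B + ε) by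
    constructor
    · exact fun i => le_of_forall_pos_le_add fun ε hε => (H ε hε).1 i
    · exact fun j => le_of_forall_pos_le_add fun ε hε => (H ε hε).2 j
  intro ε hε
  by_contra hcon
  have hbad : (∃ i, B + ε < ⟪x i t₀, w⟫) ∨ (∃ j, B + ε < ⟪y j t₀, w⟫) := by
    by_contra hb
    push_neg at hb
    exact hcon ⟨hb.1, hb.2⟩
  set A := B + ε with hA
  have hBA : B < A := lt_add_of_pos_right B hε
  set S : Set ℝ := {t | t ∈ Icc 0 t₀ ∧
    ((∃ i, A ≤ ⟪x i t, w⟫) ∨ (∃ j, A ≤ ⟪y j t, w⟫))} with hS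
  have hSne : S.Nonempty := by
    refine ⟨t₀, ⟨⟨ht₀, le_refl _⟩, ?_⟩⟩
    rcases hbad with ⟨i, hi⟩ | ⟨j, hj⟩
    · exact Or.inl ⟨i, hi.le⟩
    · exact Or.inr ⟨j, hj.le⟩
  have hScl : IsClosed S := by
    have heq : S = Icc 0 t₀ ∩ ((⋃ i, {t | A ≤ ⟪x i t, w⟫}) ∪ (⋃ j, {t | A ≤ ⟪y j t, w⟫})) := by
      ext t
      simp only [hS, Set.mem_setOf_eq, Set.mem_inter_iff, Set.mem_union, Set.mem_iUnion]
    rw [heq]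
    exact isClosed_Icc.inter
      (((isClosed_iUnion_of_finite fun i => isClosed_le continuous_const (contprojx i)).union
        (isClosed_iUnion_of_finite fun j => isClosed_le continuous_const (contprojy j))))
  have hbdd : BddBelow S := ⟨0, fun s hs => hs.1.1⟩
  set t' := sInf S with ht'
  have htS : t' ∈ S := hScl.csInf_mem hSne hbdd
  have ht'0 : 0 ≤ t' := htS.1.1
  have htpos : 0 < t' := by
    rcases lt_or_eq_of_le ht'0 with hlt | heq
    · exact hlt
    exfalso
    rcases htS.2 with ⟨i, hi⟩ | ⟨j, hj⟩
    · rw [← heq] at hi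
      exact absurd hi (not_le.2 (lt_of_le_of_lt (h0x i) hBA))
    · rw [← heq] at hj
      exact absurd hj (not_le.2 (lt_of_le_of_lt (h0y j) hBA))
  have hlt : ∀ s ∈ Ico 0 t', (∀ i, ⟪x i s, w⟫ < A) ∧ (∀ j, ⟪y j s, w⟫ < A) := by
    intro s hs
    have hsnot : s ∉ S := fun hmem => absurd (csInf_le hbdd hmem) (not_le.2 hs.2)
    have hsIcc : s ∈ Icc 0 t₀ := ⟨hs.1, le_trans hs.2.le htS.1.2⟩
    constructor
    · intro i; by_contra hcc; push_neg at hcc; exact hsnot ⟨hsIcc, Or.inl ⟨i, hcc⟩⟩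
    · intro j; by_contra hcc; push_neg at hcc; exact hsnot ⟨hsIcc, Or.inr ⟨j, hcc⟩⟩
  have hlimle : ∀ f : ℝ → ℝ, Continuous f → (∀ s ∈ Ico 0 t', f s < A) → f t' ≤ A := by
    intro f hf hfs
    have h1 : Tendsto f (𝓝[<] t') (𝓝 (f t')) := (hf.tendsto t').mono_left nhdsWithin_le_nhds
    refine le_of_tendsto h1 ?_
    filter_upwards [Ioo_mem_nhdsLT_of_mem (show t' ∈ Ioc 0 t' from ⟨htpos, le_refl _⟩)] with s hs
    exact (hfs s ⟨hs.1.le, hs.2⟩).le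
  have hle : ∀ s ∈ Icc 0 t', (∀ i, ⟪x i s, w⟫ ≤ A) ∧ (∀ j, ⟪y j s, w⟫ ≤ A) := by
    intro s hs
    rcases lt_or_eq_of_le hs.2 with hslt | hseq
    · exact ⟨fun i => ((hlt s ⟨hs.1, hslt⟩).1 i).le, fun j => ((hlt s ⟨hs.1, hslt⟩).2 j).le⟩
    · subst hseq
      exact ⟨fun i => hlimle _ (contprojx i) (fun s hs => (hlt s hs).1 i),
             fun j => hlimle _ (contprojy j) (fun s hs => (hlt s hs).2 j)⟩
  have hwlx : ∀ i : Fin N, (i : ℕ) < k → ∀ s, -τ ≤ s → s ≤ t' → ⟪x i s, w⟫ ≤ A := by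
    intro i hi s h1 h2
    rcases le_or_gt 0 s with h0 | h0
    · exact (hle s ⟨h0, h2⟩).1 i
    · exact le_trans (hxl i hi s ⟨h1, h0.le⟩) hBA.le
  have hwly : ∀ j : Fin M, (j : ℕ) < h → ∀ s, -τ ≤ s → s ≤ t' → ⟪y j s, w⟫ ≤ A := by
    intro j hj s h1 h2
    rcases le_or_gt 0 s with h0 | h0
    · exact (hle s ⟨h0, h2⟩).2 j
    · exact le_trans (hyl j hj s ⟨h1, h0.le⟩) hBA.le
  -- derivative bounds
  have hderx : ∀ i : Fin N, ∀ t ∈ Ioo 0 t',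
      ∃ u', HasDerivAt (fun s => ⟪x i s, w⟫) u' t ∧ u' ≤ Λ * (A - ⟪x i t, w⟫) := by
    intro i t ht
    have htmem : t ∈ Icc 0 t' := ⟨ht.1.le, ht.2.le⟩
    have hAq : 0 ≤ A - ⟪x i t, w⟫ := sub_nonneg.2 ((hle t htmem).1 i)
    have hxcur : ∀ j : Fin N, ⟪x j t, w⟫ ≤ A := (hle t htmem).1
    rcases lt_or_ge (i : ℕ) k with hik | hik
    · -- leader
      have hode := hsol.odex_lead i hik t ht.1
      refine ⟨_, inner_deriv' hode, ?_⟩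
      rw [inner_add_left]
      have hb1 := proj_sum_le (Finset.univ.erase i)
        (fun j => ψ (x i t) (x j t) / ((N:ℝ) + h - 1)) (fun j => x j t) (x i t) w
        (fun j _ => div_nonneg (hψb _ _).1 hcoefN.le)
        (fun j _ => (div_le_div_iff_of_pos_right hcoefN).2 (hψb _ _).2)
        (fun j _ => hxcur j) hAq
      have hb2 := proj_sum_le (Finset.univ.filter (fun j : Fin M => (j : ℕ) < h))
        (fun j => φ (x i t) (y j (t - τ)) / ((N:ℝ) + h - 1)) (fun j => y j (t - τ)) (x i t) w
        (fun j _ => div_nonneg (hφb _ _).1 hcoefN.le)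
        (fun j _ => (div_le_div_iff_of_pos_right hcoefN).2 (hφb _ _).2)
        (fun j hj => hwly j (Finset.mem_filter.1 hj).2 (t - τ) (by linarith [ht.1])
          (by linarith [ht.2, hτ])) hAq
      have hcard1 : ((Finset.univ.erase i).card : ℝ) = (N:ℝ) - 1 := by
        rw [Finset.card_erase_of_mem (Finset.mem_univ i), Finset.card_univ, Fintype.card_fin]
        have h1 : 1 ≤ N := by omega
        push_cast [Nat.cast_sub h1]
        ring
      have hcard2 : (((Finset.univ.filter (fun j : Fin M => (j : ℕ) < h)).card : ℝ)) ≤ (h:ℝ) := by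
        exact_mod_cast card_filter_lt_le M h
      have hco : ((Finset.univ.erase i).card : ℝ) * (Λ / ((N:ℝ) + h - 1)) +
          ((Finset.univ.filter (fun j : Fin M => (j : ℕ) < h)).card : ℝ) *
            (Λ / ((N:ℝ) + h - 1)) ≤ Λ := by
        rw [hcard1]
        have h5 : ((N:ℝ) - 1) + ((Finset.univ.filter (fun j : Fin M => (j : ℕ) < h)).card : ℝ)
            ≤ (N:ℝ) + h - 1 := by linarith
        calc ((N:ℝ) - 1) * (Λ / ((N:ℝ) + h - 1)) +
              ((Finset.univ.filter (fun j : Fin M => (j : ℕ) < h)).card : ℝ) *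
                (Λ / ((N:ℝ) + h - 1))
            = (((N:ℝ) - 1) + ((Finset.univ.filter (fun j : Fin M => (j : ℕ) < h)).card : ℝ)) *
              (Λ / ((N:ℝ) + h - 1)) := by ring
          _ ≤ ((N:ℝ) + h - 1) * (Λ / ((N:ℝ) + h - 1)) :=
              mul_le_mul_of_nonneg_right h5 (div_nonneg hΛpos.le hcoefN.le)
          _ = Λ := by field_simp
      have := mul_le_mul_of_nonneg_right hco hAq
      nlinarith [hb1, hb2, this]
    · -- follower
      have hode := hsol.odex_foll i hik t ht.1
      refine ⟨_, inner_deriv' hode, ?_⟩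
      have hb1 := proj_sum_le (Finset.univ.erase i)
        (fun j => ψ (x i t) (x j t) / ((N:ℝ) - 1)) (fun j => x j t) (x i t) w
        (fun j _ => div_nonneg (hψb _ _).1 hcoefN1.le)
        (fun j _ => (div_le_div_iff_of_pos_right hcoefN1).2 (hψb _ _).2)
        (fun j _ => hxcur j) hAq
      have hcard1 : ((Finset.univ.erase i).card : ℝ) = (N:ℝ) - 1 := by
        rw [Finset.card_erase_of_mem (Finset.mem_univ i), Finset.card_univ, Fintype.card_fin]
        have h1 : 1 ≤ N := by omega
        push_cast [Nat.cast_sub h1]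
        ring
      have heq : ((Finset.univ.erase i).card : ℝ) * (Λ / ((N:ℝ) - 1)) = Λ := by
        rw [hcard1]; field_simp
      calc ⟪∑ j ∈ Finset.univ.erase i,
            (ψ (x i t) (x j t) / ((N:ℝ) - 1)) • (x j t - x i t), w⟫
          ≤ ((Finset.univ.erase i).card : ℝ) * (Λ / ((N:ℝ) - 1)) * (A - ⟪x i t, w⟫) := hb1
        _ = Λ * (A - ⟪x i t, w⟫) := by rw [heq]
  have hdery : ∀ j : Fin M, ∀ t ∈ Ioo 0 t',
      ∃ u', HasDerivAt (fun s => ⟪y j s, w⟫) u' t ∧ u' ≤ Λ * (A - ⟪y j t, w⟫) := by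
    intro j t ht
    have htmem : t ∈ Icc 0 t' := ⟨ht.1.le, ht.2.le⟩
    have hAq : 0 ≤ A - ⟪y j t, w⟫ := sub_nonneg.2 ((hle t htmem).2 j)
    have hycur : ∀ j' : Fin M, ⟪y j' t, w⟫ ≤ A := (hle t htmem).2
    rcases lt_or_ge (j : ℕ) h with hjh | hjh
    · -- leader
      have hode := hsol.odey_lead j hjh t ht.1
      refine ⟨_, inner_deriv' hode, ?_⟩
      rw [inner_add_left]
      have hb1 := proj_sum_le (Finset.univ.erase j)
        (fun j' => ψs (y j t) (y j' t) / ((M:ℝ) + k - 1)) (fun j' => y j' t) (y j t) w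
        (fun j' _ => div_nonneg (hψsb _ _).1 hcoefM.le)
        (fun j' _ => (div_le_div_iff_of_pos_right hcoefM).2 (hψsb _ _).2)
        (fun j' _ => hycur j') hAq
      have hb2 := proj_sum_le (Finset.univ.filter (fun j' : Fin N => (j' : ℕ) < k))
        (fun j' => φs (y j t) (x j' (t - τ)) / ((M:ℝ) + k - 1)) (fun j' => x j' (t - τ))
        (y j t) w
        (fun j' _ => div_nonneg (hφsb _ _).1 hcoefM.le)
        (fun j' _ => (div_le_div_iff_of_pos_right hcoefM).2 (hφsb _ _).2)
        (fun j' hj' => hwlx j' (Finset.mem_filter.1 hj').2 (t - τ) (by linarith [ht.1])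
          (by linarith [ht.2, hτ])) hAq
      have hcard1 : ((Finset.univ.erase j).card : ℝ) = (M:ℝ) - 1 := by
        rw [Finset.card_erase_of_mem (Finset.mem_univ j), Finset.card_univ, Fintype.card_fin]
        have h1 : 1 ≤ M := by omega
        push_cast [Nat.cast_sub h1]
        ring
      have hcard2 : (((Finset.univ.filter (fun j' : Fin N => (j' : ℕ) < k)).card : ℝ)) ≤ (k:ℝ) := by
        exact_mod_cast card_filter_lt_le N k
      have hco : ((Finset.univ.erase j).card : ℝ) * (Λ / ((M:ℝ) + k - 1)) +
          ((Finset.univ.filter (fun j' : Fin N => (j' : ℕ) < k)).card : ℝ) *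
            (Λ / ((M:ℝ) + k - 1)) ≤ Λ := by
        rw [hcard1]
        have h5 : ((M:ℝ) - 1) + ((Finset.univ.filter (fun j' : Fin N => (j' : ℕ) < k)).card : ℝ)
            ≤ (M:ℝ) + k - 1 := by linarith
        calc ((M:ℝ) - 1) * (Λ / ((M:ℝ) + k - 1)) +
              ((Finset.univ.filter (fun j' : Fin N => (j' : ℕ) < k)).card : ℝ) *
                (Λ / ((M:ℝ) + k - 1))
            = (((M:ℝ) - 1) + ((Finset.univ.filter (fun j' : Fin N => (j' : ℕ) < k)).card : ℝ)) *
              (Λ / ((M:ℝ) + k - 1)) := by ring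
          _ ≤ ((M:ℝ) + k - 1) * (Λ / ((M:ℝ) + k - 1)) :=
              mul_le_mul_of_nonneg_right h5 (div_nonneg hΛpos.le hcoefM.le)
          _ = Λ := by field_simp
      have := mul_le_mul_of_nonneg_right hco hAq
      nlinarith [hb1, hb2, this]
    · -- follower
      have hode := hsol.odey_foll j hjh t ht.1
      refine ⟨_, inner_deriv' hode, ?_⟩
      have hb1 := proj_sum_le (Finset.univ.erase j)
        (fun j' => ψs (y j t) (y j' t) / ((M:ℝ) - 1)) (fun j' => y j' t) (y j t) w
        (fun j' _ => div_nonneg (hψsb _ _).1 hcoefM1.le)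
        (fun j' _ => (div_le_div_iff_of_pos_right hcoefM1).2 (hψsb _ _).2)
        (fun j' _ => hycur j') hAq
      have hcard1 : ((Finset.univ.erase j).card : ℝ) = (M:ℝ) - 1 := by
        rw [Finset.card_erase_of_mem (Finset.mem_univ j), Finset.card_univ, Fintype.card_fin]
        have h1 : 1 ≤ M := by omega
        push_cast [Nat.cast_sub h1]
        ring
      have heq : ((Finset.univ.erase j).card : ℝ) * (Λ / ((M:ℝ) - 1)) = Λ := by
        rw [hcard1]; field_simp
      calc ⟪∑ j' ∈ Finset.univ.erase j,
            (ψs (y j t) (y j' t) / ((M:ℝ) - 1)) • (y j' t - y j t), w⟫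
          ≤ ((Finset.univ.erase j).card : ℝ) * (Λ / ((M:ℝ) - 1)) * (A - ⟪y j t, w⟫) := hb1
        _ = Λ * (A - ⟪y j t, w⟫) := by rw [heq]
  rcases htS.2 with ⟨i, hi⟩ | ⟨j, hj⟩
  · have hg := gronwall_up ht'0 (contprojx i) (hderx i)
    have hneg : ⟪x i 0, w⟫ - A < 0 := by linarith [h0x i]
    have hmn : Real.exp (-(Λ * t')) * (⟪x i 0, w⟫ - A) < 0 :=
      mul_neg_of_pos_of_neg (Real.exp_pos _) hneg
    linarith [hg, hi, hmn]
  · have hg := gronwall_up ht'0 (contprojy j) (hdery j)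
    have hneg : ⟪y j 0, w⟫ - A < 0 := by linarith [h0y j]
    have hmn : Real.exp (-(Λ * t')) * (⟪y j 0, w⟫ - A) < 0 :=
      mul_neg_of_pos_of_neg (Real.exp_pos _) hneg
    linarith [hg, hj, hmn]

theorem stmt6
    (d N M h k : ℕ) (hd : 1 ≤ d) (hN : 2 ≤ N) (hM2 : 2 ≤ M) (hMN : M ≤ N)
    (hh1 : 1 ≤ h) (hhM : h < M) (hk1 : 1 ≤ k) (hkN : k < N)
    (τ : ℝ) (hτ : 0 < τ)
    (ψ ψs φ φs : EuclideanSpace ℝ (Fin d) → EuclideanSpace ℝ (Fin d) → ℝ)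
    (hψ : Admissible ψ) (hψs : Admissible ψs) (hφ : Admissible φ) (hφs : Admissible φs)
    (x : Fin N → ℝ → EuclideanSpace ℝ (Fin d)) (y : Fin M → ℝ → EuclideanSpace ℝ (Fin d))
    (hsol : IsSol h k τ ψ ψs φ φs x y)
    (v : EuclideanSpace ℝ (Fin d)) (Λ Γ m₀ M₀ : ℝ)
    (hΛ : Λ = Lam ψ ψs φ φs) (hΓ : Γ = Gam h k τ ψ ψs φ φs x y)
    (hm₀ : m₀ = mInit h k τ v x y) (hM₀ : M₀ = MInit h k τ v x y)
    (hm₀pos : 0 < m₀) (hm₀M₀ : m₀ ≤ M₀)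
    (σ : ℝ) (hσ : σ = min τ ((M₀ - m₀) / (4 * Λ * M₀)))
    (L : Fin N) (hLk : k ≤ (L : ℕ)) (hLm : ⟪x L 0, v⟫ = m₀) (δ₁ : ℝ)
    (hδ₁ : δ₁ = (1 - Real.exp (-(Λ * σ))) * (1 / (2 * ((N : ℝ) - 1))) * (Γ / Λ) * (1 - m₀ / M₀))
    :
    ∀ t ∈ Icc (2 * τ) (6 * τ), ∀ i : Fin N, (i : ℕ) < k →
      ⟪x i t, v⟫ ≤ M₀ * (1 - (1 / ((N : ℝ) + h - 1)) * (Γ / Λ) * δ₁ *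
        Real.exp (-(6 * τ * Λ)) * (1 - Real.exp (-(Λ * τ)))) := by
  classical
  obtain ⟨hψc, hψp, hψbdd⟩ := hψ
  obtain ⟨hψsc, hψsp, hψsbdd⟩ := hψs
  obtain ⟨hφc, hφp, hφbdd⟩ := hφ
  obtain ⟨hφsc, hφsp, hφsbdd⟩ := hφs
  have hψle : ∀ z₁ z₂, ψ z₁ z₂ ≤ Λ := by
    intro z₁ z₂
    have h1 : ψ z₁ z₂ ≤ ⨆ p : EuclideanSpace ℝ (Fin d) × EuclideanSpace ℝ (Fin d), ψ p.1 p.2 :=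
      le_ciSup hψbdd (z₁, z₂)
    rw [hΛ]
    exact le_trans h1 (le_trans (le_max_left _ _) (le_max_left _ _))
  have hψsle : ∀ z₁ z₂, ψs z₁ z₂ ≤ Λ := by
    intro z₁ z₂
    have h1 : ψs z₁ z₂ ≤ ⨆ p : EuclideanSpace ℝ (Fin d) × EuclideanSpace ℝ (Fin d), ψs p.1 p.2 :=
      le_ciSup hψsbdd (z₁, z₂)
    rw [hΛ]
    exact le_trans h1 (le_trans (le_max_right _ _) (le_max_left _ _))
  have hφle : ∀ z₁ z₂, φ z₁ z₂ ≤ Λ := by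
    intro z₁ z₂
    have h1 : φ z₁ z₂ ≤ ⨆ p : EuclideanSpace ℝ (Fin d) × EuclideanSpace ℝ (Fin d), φ p.1 p.2 :=
      le_ciSup hφbdd (z₁, z₂)
    rw [hΛ]
    exact le_trans h1 (le_trans (le_max_left _ _) (le_max_right _ _))
  have hφsle : ∀ z₁ z₂, φs z₁ z₂ ≤ Λ := by
    intro z₁ z₂
    have h1 : φs z₁ z₂ ≤ ⨆ p : EuclideanSpace ℝ (Fin d) × EuclideanSpace ℝ (Fin d), φs p.1 p.2 :=
      le_ciSup hφsbdd (z₁, z₂)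
    rw [hΛ]
    exact le_trans h1 (le_trans (le_max_right _ _) (le_max_right _ _))
  have hΛpos : 0 < Λ := lt_of_lt_of_le (hψp 0 0) (hψle 0 0)
  have hψb : ∀ z₁ z₂, 0 ≤ ψ z₁ z₂ ∧ ψ z₁ z₂ ≤ Λ := fun z₁ z₂ => ⟨(hψp z₁ z₂).le, hψle z₁ z₂⟩
  have hψsb : ∀ z₁ z₂, 0 ≤ ψs z₁ z₂ ∧ ψs z₁ z₂ ≤ Λ := fun z₁ z₂ => ⟨(hψsp z₁ z₂).le, hψsle z₁ z₂⟩
  have hφb : ∀ z₁ z₂, 0 ≤ φ z₁ z₂ ∧ φ z₁ z₂ ≤ Λ := fun z₁ z₂ => ⟨(hφp z₁ z₂).le, hφle z₁ z₂⟩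
  have hφsb : ∀ z₁ z₂, 0 ≤ φs z₁ z₂ ∧ φs z₁ z₂ ≤ Λ := fun z₁ z₂ => ⟨(hφsp z₁ z₂).le, hφsle z₁ z₂⟩
  have hcoefN : (0:ℝ) < (N:ℝ) + h - 1 := by
    have h1 : (2:ℝ) ≤ (N:ℝ) := by exact_mod_cast hN
    have h2 : (1:ℝ) ≤ (h:ℝ) := by exact_mod_cast hh1
    linarith
  have hcoefN1 : (0:ℝ) < (N:ℝ) - 1 := by
    have h1 : (2:ℝ) ≤ (N:ℝ) := by exact_mod_cast hN
    linarith
  haveI hne1 : Nonempty {i : Fin N // (i : ℕ) < k} :=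
    ⟨⟨⟨0, by omega⟩, by simp only [Fin.val_mk]; omega⟩⟩
  haveI hne2 : Nonempty {i : Fin N // k ≤ (i : ℕ)} := ⟨⟨⟨k, hkN⟩, le_refl k⟩⟩
  haveI hne3 : Nonempty {j : Fin M // (j : ℕ) < h} :=
    ⟨⟨⟨0, by omega⟩, by simp only [Fin.val_mk]; omega⟩⟩
  haveI hne4 : Nonempty {j : Fin M // h ≤ (j : ℕ)} := ⟨⟨⟨h, hhM⟩, le_refl h⟩⟩
  haveI hne5 : Nonempty (Icc (-τ) (0:ℝ)) := ⟨⟨0, ⟨by linarith, le_refl 0⟩⟩⟩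
  -- initial data bounds in norm
  have hC0xl : ∀ i : Fin N, (i : ℕ) < k → ∀ s ∈ Icc (-τ) (0:ℝ), ‖x i s‖ ≤ Cinit h k τ x y := by
    intro i hi s hs
    have hb := bddAbove_comp_prod_Icc (fun p : {i : Fin N // (i : ℕ) < k} => fun t => ‖x p.1 t‖)
      (fun p => (hsol.contx p.1).norm) (-τ) 0
    have h1 : ‖x i s‖ ≤ ⨆ p : {i : Fin N // (i : ℕ) < k} × (Icc (-τ) (0:ℝ)),
        ‖x p.1.1 (p.2 : ℝ)‖ :=
      le_ciSup hb (⟨⟨i, hi⟩, ⟨s, hs⟩⟩ : {i : Fin N // (i : ℕ) < k} × (Icc (-τ) (0:ℝ)))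
    simp only [Cinit]
    exact le_trans h1 (le_trans (le_max_left _ _) (le_max_left _ _))
  have hC0xf : ∀ i : Fin N, k ≤ (i : ℕ) → ‖x i 0‖ ≤ Cinit h k τ x y := by
    intro i hi
    have h1 : ‖x i 0‖ ≤ ⨆ i : {i : Fin N // k ≤ (i : ℕ)}, ‖x i.1 0‖ :=
      le_ciSup (f := fun i : {i : Fin N // k ≤ (i : ℕ)} => ‖x i.1 0‖)
        (Set.Finite.bddAbove (Set.finite_range _)) ⟨i, hi⟩
    simp only [Cinit]
    exact le_trans h1 (le_trans (le_max_right _ _) (le_max_left _ _))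
  have hC0yl : ∀ j : Fin M, (j : ℕ) < h → ∀ s ∈ Icc (-τ) (0:ℝ), ‖y j s‖ ≤ Cinit h k τ x y := by
    intro j hj s hs
    have hb := bddAbove_comp_prod_Icc (fun p : {j : Fin M // (j : ℕ) < h} => fun t => ‖y p.1 t‖)
      (fun p => (hsol.conty p.1).norm) (-τ) 0
    have h1 : ‖y j s‖ ≤ ⨆ p : {j : Fin M // (j : ℕ) < h} × (Icc (-τ) (0:ℝ)),
        ‖y p.1.1 (p.2 : ℝ)‖ :=
      le_ciSup hb (⟨⟨j, hj⟩, ⟨s, hs⟩⟩ : {j : Fin M // (j : ℕ) < h} × (Icc (-τ) (0:ℝ)))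
    simp only [Cinit]
    exact le_trans h1 (le_trans (le_max_left _ _) (le_max_right _ _))
  have hC0yf : ∀ j : Fin M, h ≤ (j : ℕ) → ‖y j 0‖ ≤ Cinit h k τ x y := by
    intro j hj
    have h1 : ‖y j 0‖ ≤ ⨆ j : {j : Fin M // h ≤ (j : ℕ)}, ‖y j.1 0‖ :=
      le_ciSup (f := fun j : {j : Fin M // h ≤ (j : ℕ)} => ‖y j.1 0‖)
        (Set.Finite.bddAbove (Set.finite_range _)) ⟨j, hj⟩
    simp only [Cinit]
    exact le_trans h1 (le_trans (le_max_right _ _) (le_max_right _ _))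
  have hC0nonneg : 0 ≤ Cinit h k τ x y :=
    le_trans (norm_nonneg (x ⟨k, hkN⟩ 0)) (hC0xf ⟨k, hkN⟩ (le_refl k))
  -- initial data bounds in direction v
  have hM0xl : ∀ i : Fin N, (i : ℕ) < k → ∀ s ∈ Icc (-τ) (0:ℝ), ⟪x i s, v⟫ ≤ M₀ := by
    intro i hi s hs
    have hb := bddAbove_comp_prod_Icc
      (fun p : {i : Fin N // (i : ℕ) < k} => fun t => ⟪x p.1 t, v⟫)
      (fun p => (hsol.contx p.1).inner continuous_const) (-τ) 0
    have h1 : ⟪x i s, v⟫ ≤ ⨆ p : {i : Fin N // (i : ℕ) < k} × (Icc (-τ) (0:ℝ)),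
        ⟪x p.1.1 (p.2 : ℝ), v⟫ :=
      le_ciSup hb (⟨⟨i, hi⟩, ⟨s, hs⟩⟩ : {i : Fin N // (i : ℕ) < k} × (Icc (-τ) (0:ℝ)))
    rw [hM₀]
    simp only [MInit]
    exact le_trans h1 (le_trans (le_max_left _ _) (le_max_left _ _))
  have hM0xf : ∀ i : Fin N, k ≤ (i : ℕ) → ⟪x i 0, v⟫ ≤ M₀ := by
    intro i hi
    have h1 : ⟪x i 0, v⟫ ≤ ⨆ i : {i : Fin N // k ≤ (i : ℕ)}, ⟪x i.1 0, v⟫ :=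
      le_ciSup (f := fun i : {i : Fin N // k ≤ (i : ℕ)} => ⟪x i.1 0, v⟫)
        (Set.Finite.bddAbove (Set.finite_range _)) ⟨i, hi⟩
    rw [hM₀]
    simp only [MInit]
    exact le_trans h1 (le_trans (le_max_right _ _) (le_max_left _ _))
  have hM0yl : ∀ j : Fin M, (j : ℕ) < h → ∀ s ∈ Icc (-τ) (0:ℝ), ⟪y j s, v⟫ ≤ M₀ := by
    intro j hj s hs
    have hb := bddAbove_comp_prod_Icc
      (fun p : {j : Fin M // (j : ℕ) < h} => fun t => ⟪y p.1 t, v⟫)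
      (fun p => (hsol.conty p.1).inner continuous_const) (-τ) 0
    have h1 : ⟪y j s, v⟫ ≤ ⨆ p : {j : Fin M // (j : ℕ) < h} × (Icc (-τ) (0:ℝ)),
        ⟪y p.1.1 (p.2 : ℝ), v⟫ :=
      le_ciSup hb (⟨⟨j, hj⟩, ⟨s, hs⟩⟩ : {j : Fin M // (j : ℕ) < h} × (Icc (-τ) (0:ℝ)))
    rw [hM₀]
    simp only [MInit]
    exact le_trans h1 (le_trans (le_max_left _ _) (le_max_right _ _))
  have hM0yf : ∀ j : Fin M, h ≤ (j : ℕ) → ⟪y j 0, v⟫ ≤ M₀ := by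
    intro j hj
    have h1 : ⟪y j 0, v⟫ ≤ ⨆ j : {j : Fin M // h ≤ (j : ℕ)}, ⟪y j.1 0, v⟫ :=
      le_ciSup (f := fun j : {j : Fin M // h ≤ (j : ℕ)} => ⟪y j.1 0, v⟫)
        (Set.Finite.bddAbove (Set.finite_range _)) ⟨j, hj⟩
    rw [hM₀]
    simp only [MInit]
    exact le_trans h1 (le_trans (le_max_right _ _) (le_max_right _ _))
  -- Gamma facts
  have hgψ := minOnBall_facts hC0nonneg (⟨hψc, hψp, hψbdd⟩ : Admissible ψ)
  have hgψs := minOnBall_facts hC0nonneg (⟨hψsc, hψsp, hψsbdd⟩ : Admissible ψs)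
  have hgφ := minOnBall_facts hC0nonneg (⟨hφc, hφp, hφbdd⟩ : Admissible φ)
  have hgφs := minOnBall_facts hC0nonneg (⟨hφsc, hφsp, hφsbdd⟩ : Admissible φs)
  have hΓψ : ∀ z₁ z₂, ‖z₁‖ ≤ Cinit h k τ x y → ‖z₂‖ ≤ Cinit h k τ x y → Γ ≤ ψ z₁ z₂ := by
    intro z₁ z₂ h1 h2
    rw [hΓ]
    simp only [Gam]
    exact le_trans (le_trans (min_le_left _ _) (min_le_left _ _)) (hgψ.2 z₁ z₂ h1 h2)
  have hΓΛ : Γ ≤ Λ :=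
    le_trans (hΓψ 0 0 (by simpa using hC0nonneg) (by simpa using hC0nonneg)) (hψle 0 0)
  have hΓpos : 0 < Γ := by
    rw [hΓ]
    simp only [Gam]
    exact lt_min (lt_min hgψ.1 hgψs.1) (lt_min hgφ.1 hgφs.1)
  -- invariance in direction v
  have hinv := invariance hτ hsol hN hM2 hh1 hk1 hΛpos hψb hψsb hφb hφsb v M₀
    hM0xl hM0xf hM0yl hM0yf
  -- norm invariance
  have hnormx : ∀ t, 0 ≤ t → ∀ i, ‖x i t‖ ≤ Cinit h k τ x y := by
    intro t ht i
    have hw := invariance hτ hsol hN hM2 hh1 hk1 hΛpos hψb hψsb hφb hφsb (x i t)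
      (Cinit h k τ x y * ‖x i t‖)
      (fun i' hi' s hs => le_trans (real_inner_le_norm _ _)
        (mul_le_mul_of_nonneg_right (hC0xl i' hi' s hs) (norm_nonneg _)))
      (fun i' hi' => le_trans (real_inner_le_norm _ _)
        (mul_le_mul_of_nonneg_right (hC0xf i' hi') (norm_nonneg _)))
      (fun j hj s hs => le_trans (real_inner_le_norm _ _)
        (mul_le_mul_of_nonneg_right (hC0yl j hj s hs) (norm_nonneg _)))
      (fun j hj => le_trans (real_inner_le_norm _ _)
        (mul_le_mul_of_nonneg_right (hC0yf j hj) (norm_nonneg _))) t ht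
    have h2 : ⟪x i t, x i t⟫ ≤ Cinit h k τ x y * ‖x i t‖ := hw.1 i
    rw [real_inner_self_eq_norm_mul_norm] at h2
    rcases eq_or_lt_of_le (norm_nonneg (x i t)) with h0 | h0
    · rw [← h0]; exact hC0nonneg
    · exact le_of_mul_le_mul_right h2 h0
  -- Step 1 : decay of the follower L
  have hstep1 : ∀ T, 0 ≤ T → ⟪x L T, v⟫ - M₀ ≤ Real.exp (-(Λ * T)) * (m₀ - M₀) := by
    intro T hT
    have hder : ∀ t ∈ Ioo 0 T, ∃ u', HasDerivAt (fun s => ⟪x L s, v⟫) u' t ∧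
        u' ≤ Λ * (M₀ - ⟪x L t, v⟫) := by
      intro t ht
      have hode := hsol.odex_foll L hLk t ht.1
      have hAq : 0 ≤ M₀ - ⟪x L t, v⟫ := sub_nonneg.2 ((hinv t ht.1.le).1 L)
      refine ⟨_, inner_deriv' hode, ?_⟩
      have hb1 := proj_sum_le (Finset.univ.erase L)
        (fun j => ψ (x L t) (x j t) / ((N:ℝ) - 1)) (fun j => x j t) (x L t) v
        (fun j _ => div_nonneg (hψp _ _).le hcoefN1.le)
        (fun j _ => (div_le_div_iff_of_pos_right hcoefN1).2 (hψle _ _))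
        (fun j _ => (hinv t ht.1.le).1 j) hAq
      have hcard1 : ((Finset.univ.erase L).card : ℝ) = (N:ℝ) - 1 := by
        rw [Finset.card_erase_of_mem (Finset.mem_univ L), Finset.card_univ, Fintype.card_fin]
        have h1 : 1 ≤ N := by omega
        push_cast [Nat.cast_sub h1]
        ring
      have heq : ((Finset.univ.erase L).card : ℝ) * (Λ / ((N:ℝ) - 1)) = Λ := by
        rw [hcard1]; field_simp
      calc ⟪∑ j ∈ Finset.univ.erase L,
            (ψ (x L t) (x j t) / ((N:ℝ) - 1)) • (x j t - x L t), v⟫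
          ≤ ((Finset.univ.erase L).card : ℝ) * (Λ / ((N:ℝ) - 1)) * (M₀ - ⟪x L t, v⟫) := hb1
        _ = Λ * (M₀ - ⟪x L t, v⟫) := by rw [heq]
    have hg : ⟪x L T, v⟫ - M₀ ≤ Real.exp (-(Λ * T)) * (⟪x L 0, v⟫ - M₀) :=
      gronwall_up hT ((hsol.contx L).inner continuous_const) hder
    rw [hLm] at hg
    exact hg
  -- Step 2 : leaders
  intro t₁ ht₁ i hik
  obtain ⟨ht2τ, ht6τ⟩ := ht₁
  have ht₁pos : 0 < t₁ := lt_of_lt_of_le (by linarith) ht2τ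
  have hγ0 : 0 ≤ Γ / ((N:ℝ) + h - 1) := div_nonneg hΓpos.le hcoefN.le
  have hDm0 : 0 ≤ M₀ - m₀ := by linarith
  have hM₀pos : 0 < M₀ := lt_of_lt_of_le hm₀pos hm₀M₀
  have hLi : L ≠ i := by
    intro hLi
    rw [hLi] at hLk
    omega
  have hLmem : L ∈ Finset.univ.erase i := Finset.mem_erase.2 ⟨hLi, Finset.mem_univ L⟩
  have hz0 : 0 ≤ M₀ - ⟪x i 0, v⟫ :=
    sub_nonneg.2 (hM0xl i hik 0 ⟨by linarith, le_refl 0⟩)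
  have hcont : Continuous fun s => M₀ - ⟪x i s, v⟫ :=
    continuous_const.sub ((hsol.contx i).inner continuous_const)
  have hder2 : ∀ t ∈ Ioo 0 t₁, ∃ z', HasDerivAt (fun s => M₀ - ⟪x i s, v⟫) z' t ∧
      -(Λ * (M₀ - ⟪x i t, v⟫)) + (Γ / ((N:ℝ) + h - 1) * (M₀ - m₀)) * Real.exp (-(Λ * t)) ≤ z' := by
    intro t ht
    have hode := hsol.odex_lead i hik t ht.1
    have hu' := inner_deriv' (w := v) hode
    refine ⟨_, hu'.const_sub M₀, ?_⟩
    have hAq : 0 ≤ M₀ - ⟪x i t, v⟫ := sub_nonneg.2 ((hinv t ht.1.le).1 i)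
    have hsplit : (∑ j ∈ Finset.univ.erase i,
          (ψ (x i t) (x j t) / ((N:ℝ) + h - 1)) • (x j t - x i t))
        = (∑ j ∈ (Finset.univ.erase i).erase L,
            (ψ (x i t) (x j t) / ((N:ℝ) + h - 1)) • (x j t - x i t))
          + (ψ (x i t) (x L t) / ((N:ℝ) + h - 1)) • (x L t - x i t) :=
      (Finset.sum_erase_add _ _ hLmem).symm
    have hb1 := proj_sum_le ((Finset.univ.erase i).erase L)
      (fun j => ψ (x i t) (x j t) / ((N:ℝ) + h - 1)) (fun j => x j t) (x i t) v
      (fun j _ => div_nonneg (hψp _ _).le hcoefN.le)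
      (fun j _ => (div_le_div_iff_of_pos_right hcoefN).2 (hψle _ _))
      (fun j _ => (hinv t ht.1.le).1 j) hAq
    have hb2 := proj_sum_le (Finset.univ.filter (fun j : Fin M => (j : ℕ) < h))
      (fun j => φ (x i t) (y j (t - τ)) / ((N:ℝ) + h - 1)) (fun j => y j (t - τ)) (x i t) v
      (fun j _ => div_nonneg (hφp _ _).le hcoefN.le)
      (fun j _ => (div_le_div_iff_of_pos_right hcoefN).2 (hφle _ _))
      (fun j hj => by
        rcases le_or_gt 0 (t - τ) with hs | hs
        · exact (hinv (t - τ) hs).2 j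
        · exact hM0yl j (Finset.mem_filter.1 hj).2 (t - τ) ⟨by linarith [ht.1], hs.le⟩) hAq
    have hcL1 : Γ / ((N:ℝ) + h - 1) ≤ ψ (x i t) (x L t) / ((N:ℝ) + h - 1) :=
      (div_le_div_iff_of_pos_right hcoefN).2 (hΓψ _ _ (hnormx t ht.1.le i) (hnormx t ht.1.le L))
    have hcL2 : ψ (x i t) (x L t) / ((N:ℝ) + h - 1) ≤ Λ / ((N:ℝ) + h - 1) :=
      (div_le_div_iff_of_pos_right hcoefN).2 (hψle _ _)
    have hLdec : ⟪x L t, v⟫ - M₀ ≤ -(Real.exp (-(Λ * t)) * (M₀ - m₀)) := by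
      calc ⟪x L t, v⟫ - M₀ ≤ Real.exp (-(Λ * t)) * (m₀ - M₀) := hstep1 t ht.1.le
        _ = -(Real.exp (-(Λ * t)) * (M₀ - m₀)) := by ring
    have hLneg : ⟪x L t, v⟫ - M₀ ≤ 0 :=
      le_trans hLdec (neg_nonpos.2 (mul_nonneg (Real.exp_pos _).le hDm0))
    have hinner_L : ⟪(ψ (x i t) (x L t) / ((N:ℝ) + h - 1)) • (x L t - x i t), v⟫
        = (ψ (x i t) (x L t) / ((N:ℝ) + h - 1)) * (⟪x L t, v⟫ - ⟪x i t, v⟫) := by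
      rw [real_inner_smul_left, inner_sub_left]
    have hTL : (ψ (x i t) (x L t) / ((N:ℝ) + h - 1)) * (⟪x L t, v⟫ - ⟪x i t, v⟫)
        ≤ (Λ / ((N:ℝ) + h - 1)) * (M₀ - ⟪x i t, v⟫)
          - (Γ / ((N:ℝ) + h - 1)) * (Real.exp (-(Λ * t)) * (M₀ - m₀)) := by
      have e2 : (ψ (x i t) (x L t) / ((N:ℝ) + h - 1)) * (⟪x L t, v⟫ - M₀)
          ≤ (Γ / ((N:ℝ) + h - 1)) * (⟪x L t, v⟫ - M₀) :=
        mul_le_mul_of_nonpos_right hcL1 hLneg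
      have e3 : (Γ / ((N:ℝ) + h - 1)) * (⟪x L t, v⟫ - M₀)
          ≤ (Γ / ((N:ℝ) + h - 1)) * (-(Real.exp (-(Λ * t)) * (M₀ - m₀))) :=
        mul_le_mul_of_nonneg_left hLdec hγ0
      have e4 : (ψ (x i t) (x L t) / ((N:ℝ) + h - 1)) * (M₀ - ⟪x i t, v⟫)
          ≤ (Λ / ((N:ℝ) + h - 1)) * (M₀ - ⟪x i t, v⟫) :=
        mul_le_mul_of_nonneg_right hcL2 hAq
      nlinarith [e2, e3, e4]
    have hcard' : (((Finset.univ.erase i).erase L).card : ℝ) = (N:ℝ) - 2 := by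
      rw [Finset.card_erase_of_mem hLmem, Finset.card_erase_of_mem (Finset.mem_univ i),
        Finset.card_univ, Fintype.card_fin]
      have h1 : N - 1 - 1 = N - 2 := by omega
      rw [h1, Nat.cast_sub hN]
      norm_num
    have hcard2 : (((Finset.univ.filter (fun j : Fin M => (j : ℕ) < h)).card : ℝ)) ≤ (h:ℝ) := by
      exact_mod_cast card_filter_lt_le M h
    have hco : ((N:ℝ) - 2) * (Λ / ((N:ℝ) + h - 1)) + Λ / ((N:ℝ) + h - 1) +
        ((Finset.univ.filter (fun j : Fin M => (j : ℕ) < h)).card : ℝ) *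
          (Λ / ((N:ℝ) + h - 1)) ≤ Λ := by
      have h5 : ((N:ℝ) - 2) + 1 +
          ((Finset.univ.filter (fun j : Fin M => (j : ℕ) < h)).card : ℝ)
          ≤ (N:ℝ) + h - 1 := by linarith
      calc ((N:ℝ) - 2) * (Λ / ((N:ℝ) + h - 1)) + Λ / ((N:ℝ) + h - 1) +
            ((Finset.univ.filter (fun j : Fin M => (j : ℕ) < h)).card : ℝ) *
              (Λ / ((N:ℝ) + h - 1))
          = (((N:ℝ) - 2) + 1 +
              ((Finset.univ.filter (fun j : Fin M => (j : ℕ) < h)).card : ℝ)) *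
            (Λ / ((N:ℝ) + h - 1)) := by ring
        _ ≤ ((N:ℝ) + h - 1) * (Λ / ((N:ℝ) + h - 1)) :=
            mul_le_mul_of_nonneg_right h5 (div_nonneg hΛpos.le hcoefN.le)
        _ = Λ := by field_simp
    have hcomb := mul_le_mul_of_nonneg_right hco hAq
    rw [hcard'] at hb1
    rw [hsplit, inner_add_left, inner_add_left, hinner_L]
    linarith [hb1, hb2, hTL, hcomb]
  have hzlow : (Γ / ((N:ℝ) + h - 1) * (M₀ - m₀)) * t₁ * Real.exp (-(Λ * t₁))
      ≤ M₀ - ⟪x i t₁, v⟫ :=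
    gronwall_low ht₁pos.le hz0 hcont hder2
  -- numeric chain
  have hσ0 : 0 ≤ σ := by
    rw [hσ]
    refine le_min hτ.le (div_nonneg (by linarith) ?_)
    nlinarith [mul_pos hΛpos hM₀pos]
  have hexpσ : Real.exp (-(Λ * σ)) ≤ 1 := by
    rw [← Real.exp_zero]
    exact Real.exp_le_exp.2 (by nlinarith [mul_nonneg hΛpos.le hσ0])
  have ha0 : 0 ≤ 1 - Real.exp (-(Λ * σ)) := by linarith
  have ha1 : 1 - Real.exp (-(Λ * σ)) ≤ 1 := by linarith [Real.exp_pos (-(Λ * σ))]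
  have hb0 : 0 ≤ 1 / (2 * ((N:ℝ) - 1)) := div_nonneg zero_le_one (by linarith)
  have hNr : (2:ℝ) ≤ (N:ℝ) := by exact_mod_cast hN
  have hb1' : 1 / (2 * ((N:ℝ) - 1)) ≤ 1 / 2 :=
    one_div_le_one_div_of_le (by norm_num) (by linarith)
  have hc0 : 0 ≤ Γ / Λ := div_nonneg hΓpos.le hΛpos.le
  have hc1 : Γ / Λ ≤ 1 := (div_le_one hΛpos).2 hΓΛ
  have hd0 : 0 ≤ 1 - m₀ / M₀ := by
    rw [sub_nonneg]
    exact (div_le_one hM₀pos).2 hm₀M₀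
  have hMdd : M₀ * (1 - m₀ / M₀) = M₀ - m₀ := by field_simp
  have hδnn : 0 ≤ δ₁ := by
    rw [hδ₁]
    exact mul_nonneg (mul_nonneg (mul_nonneg ha0 hb0) hc0) hd0
  have hMδ : M₀ * δ₁ ≤ (M₀ - m₀) / 2 := by
    rw [hδ₁]
    have e : M₀ * ((1 - Real.exp (-(Λ * σ))) * (1 / (2 * ((N:ℝ) - 1))) * (Γ / Λ) *
          (1 - m₀ / M₀))
        = (1 - Real.exp (-(Λ * σ))) * (1 / (2 * ((N:ℝ) - 1))) * (Γ / Λ) *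
          (M₀ * (1 - m₀ / M₀)) := by ring
    rw [e, hMdd]
    have m1 : (1 - Real.exp (-(Λ * σ))) * (1 / (2 * ((N:ℝ) - 1))) ≤ 1 * (1 / 2) :=
      mul_le_mul ha1 hb1' hb0 zero_le_one
    have m2 : (1 - Real.exp (-(Λ * σ))) * (1 / (2 * ((N:ℝ) - 1))) * (Γ / Λ)
        ≤ 1 * (1 / 2) * 1 := mul_le_mul m1 hc1 hc0 (by norm_num)
    have m3 : (1 - Real.exp (-(Λ * σ))) * (1 / (2 * ((N:ℝ) - 1))) * (Γ / Λ) * (M₀ - m₀)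
        ≤ 1 * (1 / 2) * 1 * (M₀ - m₀) := mul_le_mul_of_nonneg_right m2 hDm0
    linarith [m3]
  have hEτ1 : 1 - Real.exp (-(Λ * τ)) ≤ Λ * τ := by
    linarith [Real.add_one_le_exp (-(Λ * τ))]
  have hEτ0 : 0 ≤ 1 - Real.exp (-(Λ * τ)) := by
    have : Real.exp (-(Λ * τ)) ≤ 1 := by
      rw [← Real.exp_zero]
      exact Real.exp_le_exp.2 (by nlinarith [mul_nonneg hΛpos.le hτ.le])
    linarith
  have hE6Et : Real.exp (-(6 * τ * Λ)) ≤ Real.exp (-(Λ * t₁)) := by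
    apply Real.exp_le_exp.2
    nlinarith [mul_le_mul_of_nonneg_left ht6τ hΛpos.le]
  have hE60 : 0 ≤ Real.exp (-(6 * τ * Λ)) := (Real.exp_pos _).le
  have hfin : M₀ * (1 / ((N:ℝ) + h - 1) * (Γ / Λ) * δ₁ * Real.exp (-(6 * τ * Λ)) *
        (1 - Real.exp (-(Λ * τ))))
      ≤ (Γ / ((N:ℝ) + h - 1) * (M₀ - m₀)) * t₁ * Real.exp (-(Λ * t₁)) := by
    have hdivτ : (1 - Real.exp (-(Λ * τ))) / Λ ≤ τ := by
      rw [div_le_iff₀ hΛpos]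
      linarith
    have hdivnn : 0 ≤ (1 - Real.exp (-(Λ * τ))) / Λ := div_nonneg hEτ0 hΛpos.le
    have k1 : (M₀ * δ₁) * ((1 - Real.exp (-(Λ * τ))) / Λ) ≤ ((M₀ - m₀) / 2) * τ :=
      mul_le_mul hMδ hdivτ hdivnn (by linarith)
    have k2 : ((M₀ - m₀) / 2) * τ ≤ (M₀ - m₀) * (2 * τ) := by
      nlinarith [mul_nonneg hDm0 hτ.le]
    have k3 : (Γ / ((N:ℝ) + h - 1)) * Real.exp (-(6 * τ * Λ)) *
          ((M₀ * δ₁) * ((1 - Real.exp (-(Λ * τ))) / Λ))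
        ≤ (Γ / ((N:ℝ) + h - 1)) * Real.exp (-(6 * τ * Λ)) * ((M₀ - m₀) * (2 * τ)) :=
      mul_le_mul_of_nonneg_left (le_trans k1 k2) (mul_nonneg hγ0 hE60)
    have lhs_eq : M₀ * (1 / ((N:ℝ) + h - 1) * (Γ / Λ) * δ₁ * Real.exp (-(6 * τ * Λ)) *
          (1 - Real.exp (-(Λ * τ))))
        = (Γ / ((N:ℝ) + h - 1)) * Real.exp (-(6 * τ * Λ)) *
          ((M₀ * δ₁) * ((1 - Real.exp (-(Λ * τ))) / Λ)) := by
      field_simp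
    have k5 : (Γ / ((N:ℝ) + h - 1) * (M₀ - m₀)) * (2 * τ)
        ≤ (Γ / ((N:ℝ) + h - 1) * (M₀ - m₀)) * t₁ :=
      mul_le_mul_of_nonneg_left ht2τ (mul_nonneg hγ0 hDm0)
    have k4 : (Γ / ((N:ℝ) + h - 1) * (M₀ - m₀)) * (2 * τ) * Real.exp (-(6 * τ * Λ))
        ≤ (Γ / ((N:ℝ) + h - 1) * (M₀ - m₀)) * t₁ * Real.exp (-(Λ * t₁)) := by
      calc (Γ / ((N:ℝ) + h - 1) * (M₀ - m₀)) * (2 * τ) * Real.exp (-(6 * τ * Λ))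
          ≤ (Γ / ((N:ℝ) + h - 1) * (M₀ - m₀)) * t₁ * Real.exp (-(6 * τ * Λ)) :=
            mul_le_mul_of_nonneg_right k5 hE60
        _ ≤ (Γ / ((N:ℝ) + h - 1) * (M₀ - m₀)) * t₁ * Real.exp (-(Λ * t₁)) :=
            mul_le_mul_of_nonneg_left hE6Et
              (mul_nonneg (mul_nonneg hγ0 hDm0) (by linarith))
    calc M₀ * (1 / ((N:ℝ) + h - 1) * (Γ / Λ) * δ₁ * Real.exp (-(6 * τ * Λ)) *
          (1 - Real.exp (-(Λ * τ))))
        = (Γ / ((N:ℝ) + h - 1)) * Real.exp (-(6 * τ * Λ)) *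
          ((M₀ * δ₁) * ((1 - Real.exp (-(Λ * τ))) / Λ)) := lhs_eq
      _ ≤ (Γ / ((N:ℝ) + h - 1)) * Real.exp (-(6 * τ * Λ)) * ((M₀ - m₀) * (2 * τ)) := k3
      _ = (Γ / ((N:ℝ) + h - 1) * (M₀ - m₀)) * (2 * τ) * Real.exp (-(6 * τ * Λ)) := by ring
      _ ≤ (Γ / ((N:ℝ) + h - 1) * (M₀ - m₀)) * t₁ * Real.exp (-(Λ * t₁)) := k4
  nlinarith [hzlow, hfin]
end
end

section
/- Assume 0 < m_0 ≤ M_0 for a fixed vector v ∈ ℝ^d, and suppose there exist L ∈ {1,…,k} and a closed interval [α, β] ⊂ [−τ, 0] with β − α = σ such that m_0 ≤ ⟨x_L(t), v⟩ ≤ (M_0 + m_0)/2 for all t ∈ [α, β]. Set δ⁻₂ := (1/(2(M+k−1))) (Γ/Λ) (1 − m_0/M_0) (1 − e^{−Λσ}). Then ⟨y_i(β + τ), v⟩ ≤ (1 − δ⁻₂) M_0 for every i ∈ {1,…,h}. -/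
open Real Set Filter Topology
open scoped BigOperators RealInnerProductSpace

noncomputable section

lemma bddAbove_range_prod_Icc {I : Type*} [Finite I] {a b : ℝ} {F : I → ℝ → ℝ}
    (hF : ∀ i, Continuous (F i)) :
    BddAbove (Set.range fun p : I × (Icc a b) => F p.1 (p.2 : ℝ)) := by
  cases isEmpty_or_nonempty I with
  | inl h =>
    rw [Set.range_eq_empty]
    exact bddAbove_empty
  | inr h =>
    have key : ∀ i : I, ∃ B : ℝ, ∀ s ∈ Icc a b, F i s ≤ B := by
      intro i
      obtain ⟨B, hB⟩ := (isCompact_Icc.image (hF i)).bddAbove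
      exact ⟨B, fun s hs => hB (Set.mem_image_of_mem _ hs)⟩
    choose B hB using key
    obtain ⟨C, hC⟩ := Finite.exists_le B
    refine ⟨C, ?_⟩
    rintro _ ⟨p, rfl⟩
    exact le_trans (hB p.1 p.2 p.2.2) (hC p.1)

lemma card_filter_lt_fin {N k : ℕ} (hk : k ≤ N) :
    (Finset.univ.filter fun j : Fin N => (j : ℕ) < k).card = k := by
  have h : (Finset.univ.filter fun j : Fin N => (j : ℕ) < k)
      = Finset.map (Fin.castLEEmb hk) Finset.univ := by
    ext j
    simp only [Finset.mem_filter, Finset.mem_univ, true_and, Finset.mem_map]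
    constructor
    · intro hj
      exact ⟨⟨(j : ℕ), hj⟩, by ext; simp [Fin.castLEEmb]⟩
    · rintro ⟨a, rfl⟩
      simp only [Fin.castLEEmb_apply, Fin.coe_castLE]; exact a.2
  rw [h, Finset.card_map, Finset.card_univ, Fintype.card_fin]

lemma maxPrinciple {ι : Type*} [Fintype ι] [Nonempty ι]
    (g : ι → ℝ → ℝ) (T : ℝ)
    (hc : ∀ i, Continuous (g i))
    (hder : ∀ t, 0 < t → t ≤ T → ∀ i, ∃ Dv : ℝ, HasDerivAt (g i) Dv t ∧
      ((∀ j, g j t ≤ g i t) → Dv ≤ 0))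
    (B : ℝ) (h0 : ∀ i, g i 0 ≤ B)
    (t : ℝ) (ht0 : 0 ≤ t) (htT : t ≤ T) (i : ι) :
    g i t ≤ B := by
  classical
  set F : ℝ → ℝ := fun s => Finset.univ.sup' Finset.univ_nonempty (fun j => g j s) with hF
  have hFc : Continuous F := by
    rw [continuous_iff_continuousAt]
    intro s
    exact ContinuousAt.finset_sup'_apply _ (fun j _ => (hc j).continuousAt)
  have hF0 : F 0 ≤ B := Finset.sup'_le _ _ fun j _ => h0 j
  have hgF : ∀ j s, g j s ≤ F s := fun j s => Finset.le_sup' (fun j => g j s) (Finset.mem_univ j)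
  rcases eq_or_lt_of_le ht0 with rfl | htpos
  · exact h0 i
  have key : ∀ a ∈ Ioc (0:ℝ) t, F t ≤ F a := by
    intro a ha
    have h1 : ∀ s ∈ Icc a t, F s ≤ gronwallBound (F a) 0 0 (s - a) := by
      apply le_gronwallBound_of_liminf_deriv_right_le (f' := fun _ => (0:ℝ))
      · exact hFc.continuousOn
      · intro s hs r hr
        apply Eventually.frequently
        have hs0 : 0 < s := lt_of_lt_of_le ha.1 hs.1
        have hsT : s ≤ T := le_trans (le_of_lt hs.2) htT
        have hev : ∀ j : ι, ∀ᶠ z in 𝓝[>] s, g j z < F s + r * (z - s) := by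
          intro j
          obtain ⟨D, hD, hDle⟩ := hder s hs0 hsT j
          rcases lt_or_ge (g j s) (F s) with hlt | hge
          · have htd : Tendsto (fun z => g j z - r * (z - s)) (𝓝[>] s) (𝓝 (g j s)) := by
              have h2 : Tendsto (fun z : ℝ => g j z - r * (z - s)) (𝓝 s) (𝓝 (g j s - r * (s - s))) :=
                ((hc j).tendsto s).sub (((tendsto_id.sub_const s).const_mul r))
              simpa using h2.mono_left nhdsWithin_le_nhds
            filter_upwards [htd.eventually_lt_const hlt] with z hz
            linarith
          · have hj : g j s = F s := le_antisymm (hgF j s) hge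
            have hmax : ∀ j', g j' s ≤ g j s := fun j' => hj ▸ hgF j' s
            have hD0 : D ≤ 0 := hDle hmax
            have hslope : Tendsto (slope (g j) s) (𝓝[>] s) (𝓝 D) :=
              (hasDerivAt_iff_tendsto_slope.1 hD).mono_left
                (nhdsWithin_mono _ (fun z hz => ne_of_gt hz))
            have hrr : D < r := lt_of_le_of_lt hD0 hr
            filter_upwards [hslope.eventually_lt_const hrr,
              eventually_mem_nhdsWithin] with z hz1 hz2
            have hzs : 0 < z - s := sub_pos.2 hz2
            rw [slope_def_field, div_lt_iff₀ hzs] at hz1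
            -- slope_def_field : slope f a b = (f b - f a) / (b - a) ??
            rw [hj] at hz1
            linarith
        filter_upwards [eventually_all.2 hev, eventually_mem_nhdsWithin] with z hz1 hz2
        have hzs : 0 < z - s := sub_pos.2 hz2
        have hFz : F z < F s + r * (z - s) :=
          (Finset.sup'_lt_iff _).2 fun j _ => hz1 j
        have h3 : (z - s)⁻¹ * (F z - F s) < (z - s)⁻¹ * (r * (z - s)) :=
          mul_lt_mul_of_pos_left (by linarith) (inv_pos.2 hzs)
        calc (z - s)⁻¹ * (F z - F s) < (z - s)⁻¹ * (r * (z - s)) := h3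
          _ = r := by field_simp
      · exact le_refl (F a)
      · intro s hs; simp
    have h2 := h1 t ⟨ha.2, le_refl t⟩
    simpa [gronwallBound_K0] using h2
  have hlim : Tendsto F (𝓝[>] (0:ℝ)) (𝓝 (F 0)) := (hFc.tendsto 0).mono_left nhdsWithin_le_nhds
  have hFt : F t ≤ F 0 := by
    refine ge_of_tendsto hlim ?_
    filter_upwards [Ioc_mem_nhdsGT_of_mem ⟨le_refl 0, htpos⟩] with a ha using key a ha
  exact le_trans (hgF i t) (le_trans hFt hF0)

lemma decayLem (a b K c M₀ : ℝ) (hab : a < b) (hK : 0 < K) (f : ℝ → ℝ) (f' : ℝ → ℝ)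
    (hf : ContinuousOn f (Icc a b))
    (hd : ∀ t ∈ Ioo a b, HasDerivAt f (f' t) t)
    (hb : ∀ t ∈ Ioo a b, f' t ≤ K * (M₀ - f t) - c)
    (ha : f a ≤ M₀) :
    f b ≤ M₀ - c / K * (1 - Real.exp (-(K * (b - a)))) := by
  set w : ℝ → ℝ := fun t => (M₀ - f t) * Real.exp (K * (t - a))
    - c / K * (Real.exp (K * (t - a)) - 1) with hw
  have hce : Continuous fun t : ℝ => Real.exp (K * (t - a)) := by continuity
  have hwc : ContinuousOn w (Icc a b) :=
    ((continuousOn_const.sub hf).mul hce.continuousOn).sub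
      (continuousOn_const.mul (hce.continuousOn.sub continuousOn_const))
  set W : ℝ → ℝ := fun t => (0 - f' t) * Real.exp (K * (t - a))
    + (M₀ - f t) * (K * Real.exp (K * (t - a))) - c / K * (K * Real.exp (K * (t - a))) with hWdef
  have hWd : ∀ t ∈ Ioo a b, HasDerivAt w (W t) t := by
    intro t ht
    have he : HasDerivAt (fun s : ℝ => Real.exp (K * (s - a))) (K * Real.exp (K * (t - a))) t := by
      have h2 : HasDerivAt (fun s : ℝ => K * (s - a)) K t := by
        simpa using ((hasDerivAt_id t).sub_const a).const_mul K
      simpa [mul_comm] using h2.exp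
    exact (((hasDerivAt_const t M₀).sub (hd t ht)).mul he).sub ((he.sub_const 1).const_mul (c / K))
  have hWpos : ∀ t ∈ Ioo a b, 0 ≤ W t := by
    intro t ht
    have hE : (0:ℝ) < Real.exp (K * (t - a)) := Real.exp_pos _
    have h1 := hb t ht
    have hcK : c / K * K = c := div_mul_cancel₀ c hK.ne'
    have h2 : f' t * Real.exp (K * (t - a)) ≤ (K * (M₀ - f t) - c) * Real.exp (K * (t - a)) :=
      mul_le_mul_of_nonneg_right h1 hE.le
    simp only [hWdef]
    nlinarith [h2, hE]
  have hmono : w a ≤ w b := by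
    have hdiff : DifferentiableOn ℝ w (interior (Icc a b)) := by
      rw [interior_Icc]
      exact fun t ht => ((hWd t ht).differentiableAt).differentiableWithinAt
    have hderiv : ∀ t ∈ interior (Icc a b), 0 ≤ deriv w t := by
      rw [interior_Icc]
      intro t ht
      rw [(hWd t ht).deriv]
      exact hWpos t ht
    exact monotoneOn_of_deriv_nonneg (convex_Icc a b) hwc hdiff hderiv
      (left_mem_Icc.2 hab.le) (right_mem_Icc.2 hab.le) hab.le
  have hwa : w a = M₀ - f a := by simp [hw]
  have hE : (0:ℝ) < Real.exp (K * (b - a)) := Real.exp_pos _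
  set E := Real.exp (K * (b - a)) with hEdef
  have hwb : w b = (M₀ - f b) * E - c / K * (E - 1) := by simp [hw, hEdef]
  have hwb' : c / K * (E - 1) ≤ (M₀ - f b) * E := by
    have : 0 ≤ w b := le_trans (by linarith [hwa]) hmono
    linarith [hwb ▸ this]
  have hexpneg : Real.exp (-(K * (b - a))) = E⁻¹ := by
    rw [Real.exp_neg]
  rw [hexpneg]
  have h3 : c / K * (1 - E⁻¹) = c / K * (E - 1) / E := by
    field_simp
  rw [h3]
  have h4 : c / K * (E - 1) / E ≤ (M₀ - f b) * E / E := by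
    exact (div_le_div_iff_of_pos_right hE).mpr hwb'
  have h5 : (M₀ - f b) * E / E = M₀ - f b := by
    field_simp
  linarith [h4, h5 ▸ h4]

set_option maxHeartbeats 16000000 in
theorem stmt9
    (d N M h k : ℕ) (hd : 1 ≤ d) (hN : 2 ≤ N) (hM2 : 2 ≤ M) (hMN : M ≤ N)
    (hh1 : 1 ≤ h) (hhM : h < M) (hk1 : 1 ≤ k) (hkN : k < N)
    (τ : ℝ) (hτ : 0 < τ)
    (ψ ψs φ φs : EuclideanSpace ℝ (Fin d) → EuclideanSpace ℝ (Fin d) → ℝ)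
    (hψ : Admissible ψ) (hψs : Admissible ψs) (hφ : Admissible φ) (hφs : Admissible φs)
    (x : Fin N → ℝ → EuclideanSpace ℝ (Fin d)) (y : Fin M → ℝ → EuclideanSpace ℝ (Fin d))
    (hsol : IsSol h k τ ψ ψs φ φs x y)
    (v : EuclideanSpace ℝ (Fin d)) (Λ Γ m₀ M₀ : ℝ)
    (hΛ : Λ = Lam ψ ψs φ φs) (hΓ : Γ = Gam h k τ ψ ψs φ φs x y)
    (hm₀ : m₀ = mInit h k τ v x y) (hM₀ : M₀ = MInit h k τ v x y)
    (hm₀pos : 0 < m₀) (hm₀M₀ : m₀ ≤ M₀)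
    (σ : ℝ) (hσpos : 0 < σ) (hσle : σ ≤ min τ ((M₀ - m₀) / (4 * Λ * M₀)))
    (L : Fin N) (hLk : (L : ℕ) < k) (α β : ℝ)
    (hsub : Icc α β ⊆ Icc (-τ) 0) (hβα : β - α = σ)
    (hXL : ∀ t ∈ Icc α β, m₀ ≤ ⟪x L t, v⟫ ∧ ⟪x L t, v⟫ ≤ (M₀ + m₀) / 2) (δ₂ : ℝ)
    (hδ₂ : δ₂ = (1 / (2 * ((M : ℝ) + k - 1))) * (Γ / Λ) * (1 - m₀ / M₀) * (1 - Real.exp (-(Λ * σ))))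
    :
    ∀ i : Fin M, (i : ℕ) < h → ⟪y i (β + τ), v⟫ ≤ (1 - δ₂) * M₀ := by
  classical
  have hM2R : (2:ℝ) ≤ (M:ℝ) := by exact_mod_cast hM2
  have hNR : (2:ℝ) ≤ (N:ℝ) := by exact_mod_cast hN 
  have hk1R : (1:ℝ) ≤ (k:ℝ) := by exact_mod_cast hk1
  have hh1R : (1:ℝ) ≤ (h:ℝ) := by exact_mod_cast hh1
  have hMK : (0:ℝ) < (M:ℝ) + k - 1 := by linarith
  have hNh : (0:ℝ) < (N:ℝ) + h - 1 := by linarith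
  have hN1 : (0:ℝ) < (N:ℝ) - 1 := by linarith
  have hM1 : (0:ℝ) < (M:ℝ) - 1 := by linarith
  -- Λ bounds each influence function
  have hψΛ : ∀ z₁ z₂, ψ z₁ z₂ ≤ Λ := fun z₁ z₂ => by
    rw [hΛ]
    exact le_trans (le_ciSup hψ.2.2 (z₁, z₂)) (le_max_of_le_left (le_max_left _ _))
  have hψsΛ : ∀ z₁ z₂, ψs z₁ z₂ ≤ Λ := fun z₁ z₂ => by
    rw [hΛ]
    exact le_trans (le_ciSup hψs.2.2 (z₁, z₂)) (le_max_of_le_left (le_max_right _ _))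
  have hφΛ : ∀ z₁ z₂, φ z₁ z₂ ≤ Λ := fun z₁ z₂ => by
    rw [hΛ]
    exact le_trans (le_ciSup hφ.2.2 (z₁, z₂)) (le_max_of_le_right (le_max_left _ _))
  have hφsΛ : ∀ z₁ z₂, φs z₁ z₂ ≤ Λ := fun z₁ z₂ => by
    rw [hΛ]
    exact le_trans (le_ciSup hφs.2.2 (z₁, z₂)) (le_max_of_le_right (le_max_right _ _))
  have hΛpos : 0 < Λ := lt_of_lt_of_le (hψ.2.1 0 0) (hψΛ 0 0)
  have h0Icc : (0:ℝ) ∈ Icc (-τ) (0:ℝ) := ⟨by linarith, le_refl 0⟩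
  -- M₀ upper bounds on initial data
  have hMx_lead : ∀ (i : Fin N), (i:ℕ) < k → ∀ s ∈ Icc (-τ) (0:ℝ), ⟪x i s, v⟫ ≤ M₀ := by
    intro i hi s hs
    rw [hM₀]
    have hbdd : BddAbove (Set.range fun p : {i : Fin N // (i:ℕ) < k} × (Icc (-τ) (0:ℝ)) =>
        ⟪x p.1.1 (p.2 : ℝ), v⟫) :=
      bddAbove_range_prod_Icc (F := fun (i : {i : Fin N // (i:ℕ) < k}) (s : ℝ) => ⟪x i.1 s, v⟫)
        (fun i => (hsol.contx i.1).inner continuous_const)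
    exact le_trans (le_ciSup hbdd (⟨⟨i, hi⟩, ⟨s, hs⟩⟩)) (le_max_of_le_left (le_max_left _ _))
  have hMx_foll : ∀ (i : Fin N), k ≤ (i:ℕ) → ⟪x i 0, v⟫ ≤ M₀ := by
    intro i hi
    rw [hM₀]
    exact le_trans (le_ciSup (f := fun i : {i : Fin N // k ≤ (i:ℕ)} => ⟪x i.1 0, v⟫)
      (Set.Finite.bddAbove (Set.finite_range _)) ⟨i, hi⟩) (le_max_of_le_left (le_max_right _ _))
  have hMy_lead : ∀ (j : Fin M), (j:ℕ) < h → ∀ s ∈ Icc (-τ) (0:ℝ), ⟪y j s, v⟫ ≤ M₀ := by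
    intro j hj s hs
    rw [hM₀]
    have hbdd : BddAbove (Set.range fun p : {j : Fin M // (j:ℕ) < h} × (Icc (-τ) (0:ℝ)) =>
        ⟪y p.1.1 (p.2 : ℝ), v⟫) :=
      bddAbove_range_prod_Icc (F := fun (j : {j : Fin M // (j:ℕ) < h}) (s : ℝ) => ⟪y j.1 s, v⟫)
        (fun j => (hsol.conty j.1).inner continuous_const)
    exact le_trans (le_ciSup hbdd (⟨⟨j, hj⟩, ⟨s, hs⟩⟩)) (le_max_of_le_right (le_max_left _ _))
  have hMy_foll : ∀ (j : Fin M), h ≤ (j:ℕ) → ⟪y j 0, v⟫ ≤ M₀ := by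
    intro j hj
    rw [hM₀]
    exact le_trans (le_ciSup (f := fun j : {j : Fin M // h ≤ (j:ℕ)} => ⟪y j.1 0, v⟫)
      (Set.Finite.bddAbove (Set.finite_range _)) ⟨j, hj⟩) (le_max_of_le_right (le_max_right _ _))
  have hMx0 : ∀ i : Fin N, ⟪x i 0, v⟫ ≤ M₀ := fun i => by
    rcases lt_or_ge (i:ℕ) k with hi | hi
    · exact hMx_lead i hi 0 h0Icc
    · exact hMx_foll i hi
  have hMy0 : ∀ j : Fin M, ⟪y j 0, v⟫ ≤ M₀ := fun j => by
    rcases lt_or_ge (j:ℕ) h with hj | hj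
    · exact hMy_lead j hj 0 h0Icc
    · exact hMy_foll j hj
  -- C₀ bounds
  set C₀ := Cinit h k τ x y with hC₀def
  have hCx_lead : ∀ (i : Fin N), (i:ℕ) < k → ∀ s ∈ Icc (-τ) (0:ℝ), ‖x i s‖ ≤ C₀ := by
    intro i hi s hs
    rw [hC₀def]
    have hbdd : BddAbove (Set.range fun p : {i : Fin N // (i:ℕ) < k} × (Icc (-τ) (0:ℝ)) =>
        ‖x p.1.1 (p.2 : ℝ)‖) :=
      bddAbove_range_prod_Icc (F := fun (i : {i : Fin N // (i:ℕ) < k}) (s : ℝ) => ‖x i.1 s‖)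
        (fun i => (hsol.contx i.1).norm)
    exact le_trans (le_ciSup hbdd (⟨⟨i, hi⟩, ⟨s, hs⟩⟩)) (le_max_of_le_left (le_max_left _ _))
  have hCy_lead : ∀ (j : Fin M), (j:ℕ) < h → ∀ s ∈ Icc (-τ) (0:ℝ), ‖y j s‖ ≤ C₀ := by
    intro j hj s hs
    rw [hC₀def]
    have hbdd : BddAbove (Set.range fun p : {j : Fin M // (j:ℕ) < h} × (Icc (-τ) (0:ℝ)) =>
        ‖y p.1.1 (p.2 : ℝ)‖) :=
      bddAbove_range_prod_Icc (F := fun (j : {j : Fin M // (j:ℕ) < h}) (s : ℝ) => ‖y j.1 s‖)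
        (fun j => (hsol.conty j.1).norm)
    exact le_trans (le_ciSup hbdd (⟨⟨j, hj⟩, ⟨s, hs⟩⟩)) (le_max_of_le_right (le_max_left _ _))
  have hCx0 : ∀ i : Fin N, ‖x i 0‖ ≤ C₀ := fun i => by
    rcases lt_or_ge (i:ℕ) k with hi | hi
    · exact hCx_lead i hi 0 h0Icc
    · rw [hC₀def]
      exact le_trans (le_ciSup (f := fun i : {i : Fin N // k ≤ (i:ℕ)} => ‖x i.1 0‖)
        (Set.Finite.bddAbove (Set.finite_range _)) ⟨i, hi⟩) (le_max_of_le_left (le_max_right _ _))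
  have hCy0 : ∀ j : Fin M, ‖y j 0‖ ≤ C₀ := fun j => by
    rcases lt_or_ge (j:ℕ) h with hj | hj
    · exact hCy_lead j hj 0 h0Icc
    · rw [hC₀def]
      exact le_trans (le_ciSup (f := fun j : {j : Fin M // h ≤ (j:ℕ)} => ‖y j.1 0‖)
        (Set.Finite.bddAbove (Set.finite_range _)) ⟨j, hj⟩) (le_max_of_le_right (le_max_right _ _))
  have hC₀nonneg : 0 ≤ C₀ := le_trans (norm_nonneg _) (hCy0 ⟨0, by omega⟩)
  -- Γ lower bound for φs on the ball
  have hΓφs : ∀ z₁ z₂ : EuclideanSpace ℝ (Fin d), ‖z₁‖ ≤ C₀ → ‖z₂‖ ≤ C₀ → Γ ≤ φs z₁ z₂ := by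
    intro z₁ z₂ h1 h2
    rw [hΓ]
    refine le_trans (le_trans (min_le_right _ _) (min_le_right _ _)) ?_
    exact ciInf_le ⟨0, by rintro _ ⟨p, rfl⟩; exact (hφs.2.1 _ _).le⟩
      (⟨(z₁, z₂), h1, h2⟩ : {z : EuclideanSpace ℝ (Fin d) × EuclideanSpace ℝ (Fin d) //
        ‖z.1‖ ≤ C₀ ∧ ‖z.2‖ ≤ C₀})
  -- projection invariance on [0, τ]
  have hproj : ∀ t, 0 ≤ t → t ≤ τ →
      (∀ i : Fin N, ⟪x i t, v⟫ ≤ M₀) ∧ (∀ j : Fin M, ⟪y j t, v⟫ ≤ M₀) := by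
    have key : ∀ t, 0 ≤ t → t ≤ τ → ∀ p : (Fin N ⊕ Fin M) ⊕ Unit,
        Sum.elim (Sum.elim (fun i s => ⟪x i s, v⟫) (fun j s => ⟪y j s, v⟫)) (fun _ _ => M₀) p t
          ≤ M₀ := by
      intro t ht0 htτ p
      refine maxPrinciple _ τ ?_ ?_ M₀ ?_ t ht0 htτ p
      · rintro ((i | j) | u)
        · exact (hsol.contx i).inner continuous_const
        · exact (hsol.conty j).inner continuous_const
        · exact continuous_const
      · intro t ht0 htτ p
        have hdelay : t - τ ∈ Icc (-τ) (0:ℝ) := ⟨by linarith, by linarith⟩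
        rcases p with ((i | j) | u)
        · rcases lt_or_ge (i:ℕ) k with hik | hik
          · refine ⟨_, HasDerivAt.inner ℝ (hsol.odex_lead i hik t ht0) (hasDerivAt_const t v), ?_⟩
            intro hmax
            simp only [Sum.elim_inl, Sum.elim_inr] at hmax ⊢
            have hb : ⟪(∑ j ∈ Finset.univ.erase i,
                (ψ (x i t) (x j t) / ((N:ℝ) + ↑h - 1)) • (x j t - x i t)) +
                ∑ j ∈ Finset.univ.filter (fun j : Fin M => (j:ℕ) < h),
                  (φ (x i t) (y j (t - τ)) / ((N:ℝ) + ↑h - 1)) • (y j (t - τ) - x i t), v⟫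
                ≤ 0 := by
              rw [inner_add_left, sum_inner, sum_inner]
              refine add_nonpos (Finset.sum_nonpos ?_) (Finset.sum_nonpos ?_)
              · intro j hj
                rw [real_inner_smul_left, inner_sub_left]
                have h1 := hmax (Sum.inl (Sum.inl j))
                simp only [Sum.elim_inl] at h1
                exact mul_nonpos_of_nonneg_of_nonpos
                  (div_nonneg (hψ.2.1 _ _).le hNh.le) (by linarith)
              · intro j hj
                rw [real_inner_smul_left, inner_sub_left]
                have h1 : ⟪y j (t - τ), v⟫ ≤ M₀ :=
                  hMy_lead j (Finset.mem_filter.1 hj).2 _ hdelay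
                have h2 := hmax (Sum.inr ())
                simp only [Sum.elim_inl, Sum.elim_inr] at h2
                exact mul_nonpos_of_nonneg_of_nonpos
                  (div_nonneg (hφ.2.1 _ _).le hNh.le) (by linarith)
            simpa using hb
          · refine ⟨_, HasDerivAt.inner ℝ (hsol.odex_foll i hik t ht0) (hasDerivAt_const t v), ?_⟩
            intro hmax
            simp only [Sum.elim_inl, Sum.elim_inr] at hmax ⊢
            have hb : ⟪∑ j ∈ Finset.univ.erase i,
                (ψ (x i t) (x j t) / ((N:ℝ) - 1)) • (x j t - x i t), v⟫ ≤ 0 := by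
              rw [sum_inner]
              refine Finset.sum_nonpos ?_
              intro j hj
              rw [real_inner_smul_left, inner_sub_left]
              have h1 := hmax (Sum.inl (Sum.inl j))
              simp only [Sum.elim_inl] at h1
              exact mul_nonpos_of_nonneg_of_nonpos
                (div_nonneg (hψ.2.1 _ _).le hN1.le) (by linarith)
            simpa using hb
        · rcases lt_or_ge (j:ℕ) h with hjh | hjh
          · refine ⟨_, HasDerivAt.inner ℝ (hsol.odey_lead j hjh t ht0) (hasDerivAt_const t v), ?_⟩
            intro hmax
            simp only [Sum.elim_inl, Sum.elim_inr] at hmax ⊢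
            have hb : ⟪(∑ l ∈ Finset.univ.erase j,
                (ψs (y j t) (y l t) / ((M:ℝ) + ↑k - 1)) • (y l t - y j t)) +
                ∑ l ∈ Finset.univ.filter (fun l : Fin N => (l:ℕ) < k),
                  (φs (y j t) (x l (t - τ)) / ((M:ℝ) + ↑k - 1)) • (x l (t - τ) - y j t), v⟫
                ≤ 0 := by
              rw [inner_add_left, sum_inner, sum_inner]
              refine add_nonpos (Finset.sum_nonpos ?_) (Finset.sum_nonpos ?_)
              · intro l hl
                rw [real_inner_smul_left, inner_sub_left]
                have h1 := hmax (Sum.inl (Sum.inr l))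
                simp only [Sum.elim_inl, Sum.elim_inr] at h1
                exact mul_nonpos_of_nonneg_of_nonpos
                  (div_nonneg (hψs.2.1 _ _).le hMK.le) (by linarith)
              · intro l hl
                rw [real_inner_smul_left, inner_sub_left]
                have h1 : ⟪x l (t - τ), v⟫ ≤ M₀ :=
                  hMx_lead l (Finset.mem_filter.1 hl).2 _ hdelay
                have h2 := hmax (Sum.inr ())
                simp only [Sum.elim_inl, Sum.elim_inr] at h2
                exact mul_nonpos_of_nonneg_of_nonpos
                  (div_nonneg (hφs.2.1 _ _).le hMK.le) (by linarith)
            simpa using hb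
          · refine ⟨_, HasDerivAt.inner ℝ (hsol.odey_foll j hjh t ht0) (hasDerivAt_const t v), ?_⟩
            intro hmax
            simp only [Sum.elim_inl, Sum.elim_inr] at hmax ⊢
            have hb : ⟪∑ l ∈ Finset.univ.erase j,
                (ψs (y j t) (y l t) / ((M:ℝ) - 1)) • (y l t - y j t), v⟫ ≤ 0 := by
              rw [sum_inner]
              refine Finset.sum_nonpos ?_
              intro l hl
              rw [real_inner_smul_left, inner_sub_left]
              have h1 := hmax (Sum.inl (Sum.inr l))
              simp only [Sum.elim_inl, Sum.elim_inr] at h1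
              exact mul_nonpos_of_nonneg_of_nonpos
                (div_nonneg (hψs.2.1 _ _).le hM1.le) (by linarith)
            simpa using hb
        · exact ⟨0, hasDerivAt_const t M₀, fun _ => le_refl 0⟩
      · rintro ((i | j) | u)
        · exact hMx0 i
        · exact hMy0 j
        · exact le_refl M₀
    intro t ht0 htτ
    exact ⟨fun i => key t ht0 htτ (Sum.inl (Sum.inl i)),
      fun j => key t ht0 htτ (Sum.inl (Sum.inr j))⟩
  -- norm invariance on [0, τ]
  have hnormy : ∀ t, 0 ≤ t → t ≤ τ → ∀ j : Fin M, ‖y j t‖ ≤ C₀ := by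
    have key : ∀ t, 0 ≤ t → t ≤ τ → ∀ p : (Fin N ⊕ Fin M) ⊕ Unit,
        Sum.elim (Sum.elim (fun i s => ⟪x i s, x i s⟫) (fun j s => ⟪y j s, y j s⟫))
          (fun _ _ => C₀ * C₀) p t ≤ C₀ * C₀ := by
      intro t ht0 htτ p
      refine maxPrinciple _ τ ?_ ?_ (C₀ * C₀) ?_ t ht0 htτ p
      · rintro ((i | j) | u)
        · exact (hsol.contx i).inner (hsol.contx i)
        · exact (hsol.conty j).inner (hsol.conty j)
        · exact continuous_const
      · intro t ht0 htτ p
        have hdelay : t - τ ∈ Icc (-τ) (0:ℝ) := ⟨by linarith, by linarith⟩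
        rcases p with ((i | j) | u)
        · rcases lt_or_ge (i:ℕ) k with hik | hik
          · refine ⟨_, HasDerivAt.inner ℝ (hsol.odex_lead i hik t ht0)
              (hsol.odex_lead i hik t ht0), ?_⟩
            intro hmax
            simp only [Sum.elim_inl, Sum.elim_inr] at hmax ⊢
            have hself := hmax (Sum.inr ())
            simp only [Sum.elim_inl, Sum.elim_inr] at hself
            have hzz : ⟪x i t, x i t⟫ = ‖x i t‖ * ‖x i t‖ :=
              real_inner_self_eq_norm_mul_norm (x i t)
            have hb : ⟪(∑ j ∈ Finset.univ.erase i,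
                (ψ (x i t) (x j t) / ((N:ℝ) + ↑h - 1)) • (x j t - x i t)) +
                ∑ j ∈ Finset.univ.filter (fun j : Fin M => (j:ℕ) < h),
                  (φ (x i t) (y j (t - τ)) / ((N:ℝ) + ↑h - 1)) • (y j (t - τ) - x i t),
                x i t⟫ ≤ 0 := by
              rw [inner_add_left, sum_inner, sum_inner]
              refine add_nonpos (Finset.sum_nonpos ?_) (Finset.sum_nonpos ?_)
              · intro j hj
                rw [real_inner_smul_left, inner_sub_left]
                have h1 := hmax (Sum.inl (Sum.inl j))
                simp only [Sum.elim_inl] at h1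
                rw [real_inner_self_eq_norm_mul_norm, real_inner_self_eq_norm_mul_norm] at h1
                have hn : ‖x j t‖ ≤ ‖x i t‖ := by
                  nlinarith [norm_nonneg (x j t), norm_nonneg (x i t)]
                have hin : ⟪x j t, x i t⟫ ≤ ‖x j t‖ * ‖x i t‖ := real_inner_le_norm _ _
                refine mul_nonpos_of_nonneg_of_nonpos
                  (div_nonneg (hψ.2.1 _ _).le hNh.le) ?_
                rw [hzz]
                nlinarith [norm_nonneg (x i t)]
              · intro j hj
                rw [real_inner_smul_left, inner_sub_left]
                have h1 : ‖y j (t - τ)‖ ≤ C₀ :=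
                  hCy_lead j (Finset.mem_filter.1 hj).2 _ hdelay
                have hC : C₀ ≤ ‖x i t‖ := by
                  rw [real_inner_self_eq_norm_mul_norm] at hself
                  nlinarith [norm_nonneg (x i t)]
                have hin : ⟪y j (t - τ), x i t⟫ ≤ ‖y j (t - τ)‖ * ‖x i t‖ :=
                  real_inner_le_norm _ _
                refine mul_nonpos_of_nonneg_of_nonpos
                  (div_nonneg (hφ.2.1 _ _).le hNh.le) ?_
                rw [hzz]
                nlinarith [norm_nonneg (x i t)]
            exact add_nonpos (by rw [real_inner_comm]; exact hb) hb
          · refine ⟨_, HasDerivAt.inner ℝ (hsol.odex_foll i hik t ht0)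
              (hsol.odex_foll i hik t ht0), ?_⟩
            intro hmax
            simp only [Sum.elim_inl, Sum.elim_inr] at hmax ⊢
            have hzz : ⟪x i t, x i t⟫ = ‖x i t‖ * ‖x i t‖ :=
              real_inner_self_eq_norm_mul_norm (x i t)
            have hb : ⟪∑ j ∈ Finset.univ.erase i,
                (ψ (x i t) (x j t) / ((N:ℝ) - 1)) • (x j t - x i t), x i t⟫ ≤ 0 := by
              rw [sum_inner]
              refine Finset.sum_nonpos ?_
              intro j hj
              rw [real_inner_smul_left, inner_sub_left]
              have h1 := hmax (Sum.inl (Sum.inl j))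
              simp only [Sum.elim_inl] at h1
              rw [real_inner_self_eq_norm_mul_norm, real_inner_self_eq_norm_mul_norm] at h1
              have hn : ‖x j t‖ ≤ ‖x i t‖ := by
                nlinarith [norm_nonneg (x j t), norm_nonneg (x i t)]
              have hin : ⟪x j t, x i t⟫ ≤ ‖x j t‖ * ‖x i t‖ := real_inner_le_norm _ _
              refine mul_nonpos_of_nonneg_of_nonpos
                (div_nonneg (hψ.2.1 _ _).le hN1.le) ?_
              rw [hzz]
              nlinarith [norm_nonneg (x i t)]
            exact add_nonpos (by rw [real_inner_comm]; exact hb) hb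
        · rcases lt_or_ge (j:ℕ) h with hjh | hjh
          · refine ⟨_, HasDerivAt.inner ℝ (hsol.odey_lead j hjh t ht0)
              (hsol.odey_lead j hjh t ht0), ?_⟩
            intro hmax
            simp only [Sum.elim_inl, Sum.elim_inr] at hmax ⊢
            have hself := hmax (Sum.inr ())
            simp only [Sum.elim_inl, Sum.elim_inr] at hself
            have hzz : ⟪y j t, y j t⟫ = ‖y j t‖ * ‖y j t‖ :=
              real_inner_self_eq_norm_mul_norm (y j t)
            have hb : ⟪(∑ l ∈ Finset.univ.erase j,
                (ψs (y j t) (y l t) / ((M:ℝ) + ↑k - 1)) • (y l t - y j t)) +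
                ∑ l ∈ Finset.univ.filter (fun l : Fin N => (l:ℕ) < k),
                  (φs (y j t) (x l (t - τ)) / ((M:ℝ) + ↑k - 1)) • (x l (t - τ) - y j t),
                y j t⟫ ≤ 0 := by
              rw [inner_add_left, sum_inner, sum_inner]
              refine add_nonpos (Finset.sum_nonpos ?_) (Finset.sum_nonpos ?_)
              · intro l hl
                rw [real_inner_smul_left, inner_sub_left]
                have h1 := hmax (Sum.inl (Sum.inr l))
                simp only [Sum.elim_inl, Sum.elim_inr] at h1
                rw [real_inner_self_eq_norm_mul_norm, real_inner_self_eq_norm_mul_norm] at h1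
                have hn : ‖y l t‖ ≤ ‖y j t‖ := by
                  nlinarith [norm_nonneg (y l t), norm_nonneg (y j t)]
                have hin : ⟪y l t, y j t⟫ ≤ ‖y l t‖ * ‖y j t‖ := real_inner_le_norm _ _
                refine mul_nonpos_of_nonneg_of_nonpos
                  (div_nonneg (hψs.2.1 _ _).le hMK.le) ?_
                rw [hzz]
                nlinarith [norm_nonneg (y j t)]
              · intro l hl
                rw [real_inner_smul_left, inner_sub_left]
                have h1 : ‖x l (t - τ)‖ ≤ C₀ :=
                  hCx_lead l (Finset.mem_filter.1 hl).2 _ hdelay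
                have hC : C₀ ≤ ‖y j t‖ := by
                  rw [real_inner_self_eq_norm_mul_norm] at hself
                  nlinarith [norm_nonneg (y j t)]
                have hin : ⟪x l (t - τ), y j t⟫ ≤ ‖x l (t - τ)‖ * ‖y j t‖ :=
                  real_inner_le_norm _ _
                refine mul_nonpos_of_nonneg_of_nonpos
                  (div_nonneg (hφs.2.1 _ _).le hMK.le) ?_
                rw [hzz]
                nlinarith [norm_nonneg (y j t)]
            exact add_nonpos (by rw [real_inner_comm]; exact hb) hb
          · refine ⟨_, HasDerivAt.inner ℝ (hsol.odey_foll j hjh t ht0)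
              (hsol.odey_foll j hjh t ht0), ?_⟩
            intro hmax
            simp only [Sum.elim_inl, Sum.elim_inr] at hmax ⊢
            have hzz : ⟪y j t, y j t⟫ = ‖y j t‖ * ‖y j t‖ :=
              real_inner_self_eq_norm_mul_norm (y j t)
            have hb : ⟪∑ l ∈ Finset.univ.erase j,
                (ψs (y j t) (y l t) / ((M:ℝ) - 1)) • (y l t - y j t), y j t⟫ ≤ 0 := by
              rw [sum_inner]
              refine Finset.sum_nonpos ?_
              intro l hl
              rw [real_inner_smul_left, inner_sub_left]
              have h1 := hmax (Sum.inl (Sum.inr l))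
              simp only [Sum.elim_inl, Sum.elim_inr] at h1
              rw [real_inner_self_eq_norm_mul_norm, real_inner_self_eq_norm_mul_norm] at h1
              have hn : ‖y l t‖ ≤ ‖y j t‖ := by
                nlinarith [norm_nonneg (y l t), norm_nonneg (y j t)]
              have hin : ⟪y l t, y j t⟫ ≤ ‖y l t‖ * ‖y j t‖ := real_inner_le_norm _ _
              refine mul_nonpos_of_nonneg_of_nonpos
                (div_nonneg (hψs.2.1 _ _).le hM1.le) ?_
              rw [hzz]
              nlinarith [norm_nonneg (y j t)]
            exact add_nonpos (by rw [real_inner_comm]; exact hb) hb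
        · exact ⟨0, hasDerivAt_const t (C₀ * C₀), fun _ => le_refl 0⟩
      · rintro ((i | j) | u)
        · simp only [Sum.elim_inl]
          rw [real_inner_self_eq_norm_mul_norm]
          exact mul_self_le_mul_self (norm_nonneg _) (hCx0 i)
        · simp only [Sum.elim_inl, Sum.elim_inr]
          rw [real_inner_self_eq_norm_mul_norm]
          exact mul_self_le_mul_self (norm_nonneg _) (hCy0 j)
        · exact le_refl _
    intro t ht0 htτ j
    have h1 := key t ht0 htτ (Sum.inl (Sum.inr j))
    simp only [Sum.elim_inl, Sum.elim_inr] at h1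
    rw [real_inner_self_eq_norm_mul_norm] at h1
    nlinarith [norm_nonneg (y j t), hC₀nonneg]
  -- final estimate
  intro i hi
  have hαβ : α < β := by linarith
  have hατ : -τ ≤ α := (hsub ⟨le_refl α, hαβ.le⟩).1
  have hβ0 : β ≤ 0 := (hsub ⟨hαβ.le, le_refl β⟩).2
  set a := α + τ with hadef
  set b := β + τ with hbdef
  have ha0 : (0:ℝ) ≤ a := by rw [hadef]; linarith
  have hbτ : b ≤ τ := by rw [hbdef]; linarith
  have habl : a < b := by rw [hadef, hbdef]; linarith
  set c := Γ * (M₀ - m₀) / (2 * ((M:ℝ) + ↑k - 1)) with hcdef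
  have hM₀pos : 0 < M₀ := lt_of_lt_of_le hm₀pos hm₀M₀
  have hest := decayLem a b Λ c M₀ habl hΛpos (fun s => ⟪y i s, v⟫)
    (fun s => ⟪(∑ j ∈ Finset.univ.erase i,
        (ψs (y i s) (y j s) / ((M:ℝ) + ↑k - 1)) • (y j s - y i s)) +
      ∑ j ∈ Finset.univ.filter (fun j : Fin N => (j:ℕ) < k),
        (φs (y i s) (x j (s - τ)) / ((M:ℝ) + ↑k - 1)) • (x j (s - τ) - y i s), v⟫)
    ((hsol.conty i).inner continuous_const).continuousOn
    (by
      intro t ht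
      have ht0 : 0 < t := lt_of_le_of_lt ha0 ht.1
      have hder := HasDerivAt.inner ℝ (hsol.odey_lead i hi t ht0) (hasDerivAt_const t v)
      simpa using hder)
    (by
      intro t ht
      have ht0 : 0 < t := lt_of_le_of_lt ha0 ht.1
      have htτ : t ≤ τ := le_trans ht.2.le hbτ
      have hdel : t - τ ∈ Icc (-τ) (0:ℝ) := ⟨by linarith, by linarith⟩
      have hta := ht.1
      have htb := ht.2
      rw [hadef] at hta
      rw [hbdef] at htb
      have hdelαβ : t - τ ∈ Icc α β := ⟨by linarith, by linarith⟩
      have hfM : ⟪y i t, v⟫ ≤ M₀ := (hproj t ht0.le htτ).2 i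
      simp only [inner_add_left, sum_inner, real_inner_smul_left, inner_sub_left]
      have hsum1 : ∑ j ∈ Finset.univ.erase i,
          ψs (y i t) (y j t) / ((M:ℝ) + ↑k - 1) * (⟪y j t, v⟫ - ⟪y i t, v⟫)
            ≤ ((M:ℝ) - 1) * (Λ / ((M:ℝ) + ↑k - 1) * (M₀ - ⟪y i t, v⟫)) := by
        calc ∑ j ∈ Finset.univ.erase i,
            ψs (y i t) (y j t) / ((M:ℝ) + ↑k - 1) * (⟪y j t, v⟫ - ⟪y i t, v⟫)
            ≤ ∑ _j ∈ Finset.univ.erase i, Λ / ((M:ℝ) + ↑k - 1) * (M₀ - ⟪y i t, v⟫) := by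
              refine Finset.sum_le_sum ?_
              intro j hj
              have hy : ⟪y j t, v⟫ ≤ M₀ := (hproj t ht0.le htτ).2 j
              have hc0 : 0 ≤ ψs (y i t) (y j t) / ((M:ℝ) + ↑k - 1) :=
                div_nonneg (hψs.2.1 _ _).le hMK.le
              have hc1 : ψs (y i t) (y j t) / ((M:ℝ) + ↑k - 1) ≤ Λ / ((M:ℝ) + ↑k - 1) := by
                gcongr
                exact hψsΛ _ _
              calc ψs (y i t) (y j t) / ((M:ℝ) + ↑k - 1) * (⟪y j t, v⟫ - ⟪y i t, v⟫)
                  ≤ ψs (y i t) (y j t) / ((M:ℝ) + ↑k - 1) * (M₀ - ⟪y i t, v⟫) :=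
                    mul_le_mul_of_nonneg_left (by linarith) hc0
                _ ≤ Λ / ((M:ℝ) + ↑k - 1) * (M₀ - ⟪y i t, v⟫) :=
                    mul_le_mul_of_nonneg_right hc1 (by linarith)
          _ = (((Finset.univ.erase i).card : ℕ) : ℝ) *
              (Λ / ((M:ℝ) + ↑k - 1) * (M₀ - ⟪y i t, v⟫)) := by
              rw [Finset.sum_const, nsmul_eq_mul]
          _ = ((M:ℝ) - 1) * (Λ / ((M:ℝ) + ↑k - 1) * (M₀ - ⟪y i t, v⟫)) := by
              rw [Finset.card_erase_of_mem (Finset.mem_univ i), Finset.card_univ,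
                Fintype.card_fin, Nat.cast_sub (by omega : 1 ≤ M), Nat.cast_one]
      have hLmem : L ∈ Finset.univ.filter (fun j : Fin N => (j:ℕ) < k) :=
        Finset.mem_filter.2 ⟨Finset.mem_univ _, hLk⟩
      rw [← Finset.sum_erase_add _ _ hLmem]
      have hsum2 : ∑ j ∈ (Finset.univ.filter (fun j : Fin N => (j:ℕ) < k)).erase L,
          φs (y i t) (x j (t - τ)) / ((M:ℝ) + ↑k - 1) * (⟪x j (t - τ), v⟫ - ⟪y i t, v⟫)
            ≤ ((k:ℝ) - 1) * (Λ / ((M:ℝ) + ↑k - 1) * (M₀ - ⟪y i t, v⟫)) := by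
        calc ∑ j ∈ (Finset.univ.filter (fun j : Fin N => (j:ℕ) < k)).erase L,
            φs (y i t) (x j (t - τ)) / ((M:ℝ) + ↑k - 1) * (⟪x j (t - τ), v⟫ - ⟪y i t, v⟫)
            ≤ ∑ _j ∈ (Finset.univ.filter (fun j : Fin N => (j:ℕ) < k)).erase L,
              Λ / ((M:ℝ) + ↑k - 1) * (M₀ - ⟪y i t, v⟫) := by
              refine Finset.sum_le_sum ?_
              intro j hj
              have hxj : ⟪x j (t - τ), v⟫ ≤ M₀ :=
                hMx_lead j (Finset.mem_filter.1 (Finset.mem_of_mem_erase hj)).2 _ hdel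
              have hc0 : 0 ≤ φs (y i t) (x j (t - τ)) / ((M:ℝ) + ↑k - 1) :=
                div_nonneg (hφs.2.1 _ _).le hMK.le
              have hc1 : φs (y i t) (x j (t - τ)) / ((M:ℝ) + ↑k - 1) ≤ Λ / ((M:ℝ) + ↑k - 1) := by
                gcongr
                exact hφsΛ _ _
              calc φs (y i t) (x j (t - τ)) / ((M:ℝ) + ↑k - 1) * (⟪x j (t - τ), v⟫ - ⟪y i t, v⟫)
                  ≤ φs (y i t) (x j (t - τ)) / ((M:ℝ) + ↑k - 1) * (M₀ - ⟪y i t, v⟫) :=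
                    mul_le_mul_of_nonneg_left (by linarith) hc0
                _ ≤ Λ / ((M:ℝ) + ↑k - 1) * (M₀ - ⟪y i t, v⟫) :=
                    mul_le_mul_of_nonneg_right hc1 (by linarith)
          _ = ((((Finset.univ.filter (fun j : Fin N => (j:ℕ) < k)).erase L).card : ℕ) : ℝ) *
              (Λ / ((M:ℝ) + ↑k - 1) * (M₀ - ⟪y i t, v⟫)) := by
              rw [Finset.sum_const, nsmul_eq_mul]
          _ = ((k:ℝ) - 1) * (Λ / ((M:ℝ) + ↑k - 1) * (M₀ - ⟪y i t, v⟫)) := by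
              rw [Finset.card_erase_of_mem hLmem, card_filter_lt_fin hkN.le,
                Nat.cast_sub (by omega : 1 ≤ k), Nat.cast_one]
      have htermL : φs (y i t) (x L (t - τ)) / ((M:ℝ) + ↑k - 1) * (⟪x L (t - τ), v⟫ - ⟪y i t, v⟫)
          ≤ Λ / ((M:ℝ) + ↑k - 1) * (M₀ - ⟪y i t, v⟫) - c := by
        have hvL : ⟪x L (t - τ), v⟫ ≤ (M₀ + m₀) / 2 := (hXL _ hdelαβ).2
        have hny : ‖y i t‖ ≤ C₀ := hnormy t ht0.le htτ i
        have hnx : ‖x L (t - τ)‖ ≤ C₀ := hCx_lead L hLk _ hdel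
        have hηΓ : Γ / ((M:ℝ) + ↑k - 1) ≤ φs (y i t) (x L (t - τ)) / ((M:ℝ) + ↑k - 1) := by
          gcongr
          exact hΓφs _ _ hny hnx
        have hη0 : 0 ≤ φs (y i t) (x L (t - τ)) / ((M:ℝ) + ↑k - 1) :=
          div_nonneg (hφs.2.1 _ _).le hMK.le
        have hηΛ : φs (y i t) (x L (t - τ)) / ((M:ℝ) + ↑k - 1) ≤ Λ / ((M:ℝ) + ↑k - 1) := by
          gcongr
          exact hφsΛ _ _
        have hq : ⟪x L (t - τ), v⟫ - M₀ ≤ -((M₀ - m₀) / 2) := by linarith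
        have h1 : φs (y i t) (x L (t - τ)) / ((M:ℝ) + ↑k - 1) * (⟪x L (t - τ), v⟫ - M₀)
            ≤ Γ / ((M:ℝ) + ↑k - 1) * (-((M₀ - m₀) / 2)) :=
          le_trans (mul_le_mul_of_nonneg_left hq hη0)
            (mul_le_mul_of_nonpos_right hηΓ (by linarith))
        have h2 : φs (y i t) (x L (t - τ)) / ((M:ℝ) + ↑k - 1) * (M₀ - ⟪y i t, v⟫)
            ≤ Λ / ((M:ℝ) + ↑k - 1) * (M₀ - ⟪y i t, v⟫) :=
          mul_le_mul_of_nonneg_right hηΛ (by linarith)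
        have hceq : Γ / ((M:ℝ) + ↑k - 1) * (-((M₀ - m₀) / 2)) = -c := by
          rw [hcdef]; field_simp
        have hid : φs (y i t) (x L (t - τ)) / ((M:ℝ) + ↑k - 1) * (⟪x L (t - τ), v⟫ - ⟪y i t, v⟫)
            = φs (y i t) (x L (t - τ)) / ((M:ℝ) + ↑k - 1) * (⟪x L (t - τ), v⟫ - M₀)
              + φs (y i t) (x L (t - τ)) / ((M:ℝ) + ↑k - 1) * (M₀ - ⟪y i t, v⟫) := by ring
        linarith
      have hfinal : ((M:ℝ) - 1) * (Λ / ((M:ℝ) + ↑k - 1) * (M₀ - ⟪y i t, v⟫))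
          + (((k:ℝ) - 1) * (Λ / ((M:ℝ) + ↑k - 1) * (M₀ - ⟪y i t, v⟫))
            + (Λ / ((M:ℝ) + ↑k - 1) * (M₀ - ⟪y i t, v⟫) - c))
          = Λ * (M₀ - ⟪y i t, v⟫) - c := by
        field_simp
        ring
      linarith)
    ((hproj a ha0 (le_trans habl.le hbτ)).2 i)
  have hba : b - a = σ := by rw [hadef, hbdef]; linarith
  rw [hba] at hest
  have halg : M₀ - c / Λ * (1 - Real.exp (-(Λ * σ))) = (1 - δ₂) * M₀ := by
    rw [hδ₂, hcdef]
    field_simp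
  rw [halg] at hest
  exact hest
end
end
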